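/- Assume Γ(a,b) contains some matrix with the same support as X_0. Then: (i) the sequences (R_i(X_{2n}))_{n≥0} (for each i) and (C_j(X_{2n+1}))_{n≥0} (for each j) converge to 1 at an at least geometric rate; (ii) the IPFP sequence (X_n)_{n≥0} converges at an at least geometric rate to a matrix X_∞ with Supp(X_∞) = Supp(X_0). -/

import Mathlib

open Filter Topology

namespace IPFP

variable {p q : ℕ}

/-- Row sums `X(i,+)`. -/
noncomputable def rowSum (X : Matrix (Fin p) (Fin q) ℝ) (i : Fin p) : ℝ := ∑ j, X i j

/-- Column sums `X(+,j)`. -/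
noncomputable def colSum (X : Matrix (Fin p) (Fin q) ℝ) (j : Fin q) : ℝ := ∑ i, X i j

/-- `R_i(X) = X(i,+)/a_i`. -/
noncomputable def Rrat (a : Fin p → ℝ) (X : Matrix (Fin p) (Fin q) ℝ) (i : Fin p) : ℝ :=
  rowSum X i / a i

/-- `C_j(X) = X(+,j)/b_j`. -/
noncomputable def Crat (b : Fin q → ℝ) (X : Matrix (Fin p) (Fin q) ℝ) (j : Fin q) : ℝ :=
  colSum X j / b j

/-- `T_R(X)(i,j) = X(i,j)/R_i(X)`. -/
noncomputable def TR (a : Fin p → ℝ) (X : Matrix (Fin p) (Fin q) ℝ) :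
    Matrix (Fin p) (Fin q) ℝ :=
  fun i j => X i j / Rrat a X i

/-- `T_C(X)(i,j) = X(i,j)/C_j(X)`. -/
noncomputable def TC (b : Fin q → ℝ) (X : Matrix (Fin p) (Fin q) ℝ) :
    Matrix (Fin p) (Fin q) ℝ :=
  fun i j => X i j / Crat b X j

/-- The IPFP sequence: `X_0 = X0`, `X_{2n+1} = T_R(X_{2n})`, `X_{2n+2} = T_C(X_{2n+1})`. -/
noncomputable def ipfp (a : Fin p → ℝ) (b : Fin q → ℝ) (X0 : Matrix (Fin p) (Fin q) ℝ) :
    ℕ → Matrix (Fin p) (Fin q) ℝ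
  | 0 => X0
  | n + 1 => if Even n then TR a (ipfp a b X0 n) else TC b (ipfp a b X0 n)

/-- Membership in `Γ₀`: nonnegative entries, positive row and column sums. -/
def memGamma0 (X : Matrix (Fin p) (Fin q) ℝ) : Prop :=
  (∀ i j, 0 ≤ X i j) ∧ (∀ i, 0 < rowSum X i) ∧ (∀ j, 0 < colSum X j)

/-- Membership in `Γ₁`: member of `Γ₀` with total sum `1`. -/
def memGamma1 (X : Matrix (Fin p) (Fin q) ℝ) : Prop :=
  memGamma0 X ∧ ∑ i, ∑ j, X i j = 1

/-- Membership in `Γ(a,b)`: member of `Γ₀` with row marginals `a` and column marginals `b`. -/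
def memGamma (a : Fin p → ℝ) (b : Fin q → ℝ) (X : Matrix (Fin p) (Fin q) ℝ) : Prop :=
  memGamma0 X ∧ (∀ i, rowSum X i = a i) ∧ (∀ j, colSum X j = b j)

/-- `Supp(X) ⊆ Supp(Y)`. -/
def suppSubset (X Y : Matrix (Fin p) (Fin q) ℝ) : Prop :=
  ∀ i j, 0 < X i j → 0 < Y i j

/-- Membership in `Γ(a,b,X0)`: member of `Γ(a,b)` with support contained in `Supp(X0)`. -/
def memGammaSub (a : Fin p → ℝ) (b : Fin q → ℝ) (X0 X : Matrix (Fin p) (Fin q) ℝ) : Prop :=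
  memGamma a b X ∧ suppSubset X X0

/-- Relative entropy (I-divergence) `D(Y‖X) = Σ_{(i,j) ∈ Supp X} Y(i,j)·ln(Y(i,j)/X(i,j))`
(finite expression; it agrees with the relative entropy whenever `Supp Y ⊆ Supp X`,
with the convention `0·ln 0 = 0`). -/
noncomputable def relEnt (Y X : Matrix (Fin p) (Fin q) ℝ) : ℝ :=
  ∑ i, ∑ j, if 0 < X i j then Y i j * Real.log (Y i j / X i j) else 0

/-- A real sequence converges to `l` at an at least geometric rate:
it tends to `l` and `limsup_n |x_n − l|^{1/n} < 1`. -/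
noncomputable def geomSeq (x : ℕ → ℝ) (l : ℝ) : Prop :=
  Tendsto x atTop (nhds l) ∧
    Filter.limsup (fun n : ℕ => |x n - l| ^ ((n : ℝ)⁻¹)) atTop < 1

/-- A matrix sequence converges to `L` at an at least geometric rate (using the
`ℓ¹` norm on entries): it tends to `L` and `limsup_n ‖X_n − L‖^{1/n} < 1`. -/
noncomputable def geomMat (X : ℕ → Matrix (Fin p) (Fin q) ℝ)
    (L : Matrix (Fin p) (Fin q) ℝ) : Prop :=
  Tendsto X atTop (nhds L) ∧
    Filter.limsup (fun n : ℕ => (∑ i, ∑ j, |X n i j - L i j|) ^ ((n : ℝ)⁻¹)) atTop < 1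

end IPFP

open IPFP

open IPFP Finset

namespace IPFPAux

/-- Bundled context. -/
structure Ctx (p q : ℕ) : Type where
  hp : 0 < p
  hq : 0 < q
  a : Fin p → ℝ
  b : Fin q → ℝ
  ha : ∀ i, 0 < a i
  hb : ∀ j, 0 < b j
  hsa : ∑ i, a i = 1
  hsb : ∑ j, b j = 1
  X0 : Matrix (Fin p) (Fin q) ℝ
  hX0 : memGamma1 X0
  S : Matrix (Fin p) (Fin q) ℝ
  hS : memGamma a b S
  hSsupp : ∀ i j, 0 < S i j ↔ 0 < X0 i j

namespace Ctx

variable {p q : ℕ} (c : Ctx p q)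

noncomputable def X (n : ℕ) : Matrix (Fin p) (Fin q) ℝ := ipfp c.a c.b c.X0 n

lemma X_zero : c.X 0 = c.X0 := rfl

lemma X_succ (n : ℕ) :
    c.X (n + 1) = if Even n then TR c.a (c.X n) else TC c.b (c.X n) := rfl

lemma X_odd (k : ℕ) : c.X (2 * k + 1) = TR c.a (c.X (2 * k)) := by
  rw [X_succ]; simp [Nat.even_mul]

lemma X_even (k : ℕ) : c.X (2 * k + 2) = TC c.b (c.X (2 * k + 1)) := by
  rw [show 2 * k + 2 = (2 * k + 1) + 1 from rfl, X_succ]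
  simp [Nat.even_add_one, Nat.even_mul]

lemma a_le_one (i : Fin p) : c.a i ≤ 1 := by
  rw [← c.hsa]
  exact Finset.single_le_sum (fun i _ => (c.ha i).le) (mem_univ i)

lemma b_le_one (j : Fin q) : c.b j ≤ 1 := by
  rw [← c.hsb]
  exact Finset.single_le_sum (fun j _ => (c.hb j).le) (mem_univ j)

lemma exists_pos_in_row (i : Fin p) : ∃ j, 0 < c.X0 i j := by
  by_contra h
  push_neg at h
  have : rowSum c.X0 i ≤ 0 := Finset.sum_nonpos (fun j _ => h j)
  exact absurd (c.hX0.1.2.1 i) (not_lt.2 this)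

lemma exists_pos_in_col (j : Fin q) : ∃ i, 0 < c.X0 i j := by
  by_contra h
  push_neg at h
  have : colSum c.X0 j ≤ 0 := Finset.sum_nonpos (fun i _ => h i)
  exact absurd (c.hX0.1.2.2 j) (not_lt.2 this)

/-- The invariant carried along the IPFP orbit. -/
def Good (Y : Matrix (Fin p) (Fin q) ℝ) : Prop :=
  (∀ i j, 0 ≤ Y i j) ∧ (∀ i j, (0 < Y i j ↔ 0 < c.X0 i j)) ∧ (∑ i, ∑ j, Y i j = 1)

lemma good_rowSum_pos {Y} (h : c.Good Y) (i : Fin p) : 0 < rowSum Y i := by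
  obtain ⟨j, hj⟩ := c.exists_pos_in_row i
  have : 0 < Y i j := (h.2.1 i j).2 hj
  exact lt_of_lt_of_le this (Finset.single_le_sum (fun j _ => h.1 i j) (mem_univ j))

lemma good_colSum_pos {Y} (h : c.Good Y) (j : Fin q) : 0 < colSum Y j := by
  obtain ⟨i, hi⟩ := c.exists_pos_in_col j
  have : 0 < Y i j := (h.2.1 i j).2 hi
  exact lt_of_lt_of_le this (Finset.single_le_sum (fun i _ => h.1 i j) (mem_univ i))

lemma good_Rrat_pos {Y} (h : c.Good Y) (i : Fin p) : 0 < Rrat c.a Y i :=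
  div_pos (c.good_rowSum_pos h i) (c.ha i)

lemma good_Crat_pos {Y} (h : c.Good Y) (j : Fin q) : 0 < Crat c.b Y j :=
  div_pos (c.good_colSum_pos h j) (c.hb j)

lemma good_TR {Y} (h : c.Good Y) : c.Good (TR c.a Y) := by
  refine ⟨fun i j => div_nonneg (h.1 i j) (c.good_Rrat_pos h i).le, fun i j => ?_, ?_⟩
  · rw [← h.2.1 i j]
    constructor
    · intro hpos
      by_contra hy
      have : Y i j = 0 := le_antisymm (not_lt.1 hy) (h.1 i j)
      simp [TR, this] at hpos
    · intro hy
      exact div_pos hy (c.good_Rrat_pos h i)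
  · have : ∀ i, ∑ j, TR c.a Y i j = c.a i := by
      intro i
      have hR : Rrat c.a Y i ≠ 0 := (c.good_Rrat_pos h i).ne'
      have hr : rowSum Y i ≠ 0 := (c.good_rowSum_pos h i).ne'
      simp only [TR, ← Finset.sum_div]
      rw [show (∑ j, Y i j) = rowSum Y i from rfl, Rrat]
      field_simp
    rw [Finset.sum_congr rfl (fun i _ => this i), c.hsa]

lemma good_TC {Y} (h : c.Good Y) : c.Good (TC c.b Y) := by
  refine ⟨fun i j => div_nonneg (h.1 i j) (c.good_Crat_pos h j).le, fun i j => ?_, ?_⟩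
  · rw [← h.2.1 i j]
    constructor
    · intro hpos
      by_contra hy
      have : Y i j = 0 := le_antisymm (not_lt.1 hy) (h.1 i j)
      simp [IPFP.TC, this] at hpos
    · intro hy
      exact div_pos hy (c.good_Crat_pos h j)
  · have : ∀ j, ∑ i, TC c.b Y i j = c.b j := by
      intro j
      have hC : Crat c.b Y j ≠ 0 := (c.good_Crat_pos h j).ne'
      have hc : colSum Y j ≠ 0 := (c.good_colSum_pos h j).ne'
      simp only [IPFP.TC, ← Finset.sum_div]
      rw [show (∑ i, Y i j) = colSum Y j from rfl, Crat]
      field_simp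
    rw [show (∑ i, ∑ j, TC c.b Y i j) = ∑ j, ∑ i, TC c.b Y i j from Finset.sum_comm,
      Finset.sum_congr rfl (fun j _ => this j), c.hsb]

lemma good_X0 : c.Good c.X0 := ⟨c.hX0.1.1, fun _ _ => Iff.rfl, c.hX0.2⟩

lemma good_X (n : ℕ) : c.Good (c.X n) := by
  induction n with
  | zero => exact c.good_X0
  | succ n ih =>
    rw [X_succ]
    by_cases h : Even n
    · simpa [h] using c.good_TR ih
    · simpa [h] using c.good_TC ih

lemma entry_le_one {Y} (h : c.Good Y) (i : Fin p) (j : Fin q) : Y i j ≤ 1 := by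
  calc Y i j ≤ rowSum Y i := Finset.single_le_sum (fun j _ => h.1 i j) (mem_univ j)
    _ ≤ ∑ i, rowSum Y i := Finset.single_le_sum
        (fun i _ => (c.good_rowSum_pos h i).le) (mem_univ i)
    _ = 1 := h.2.2

lemma rowSum_le_one {Y} (h : c.Good Y) (i : Fin p) : rowSum Y i ≤ 1 := by
  calc rowSum Y i ≤ ∑ i, rowSum Y i := Finset.single_le_sum
        (fun i _ => (c.good_rowSum_pos h i).le) (mem_univ i)
    _ = 1 := h.2.2

lemma colSum_le_one {Y} (h : c.Good Y) (j : Fin q) : colSum Y j ≤ 1 := by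
  have : ∑ j, colSum Y j = 1 := by
    rw [show (∑ j, colSum Y j) = ∑ j, ∑ i, Y i j from rfl, Finset.sum_comm]; exact h.2.2
  calc colSum Y j ≤ ∑ j, colSum Y j := Finset.single_le_sum
        (fun j _ => (c.good_colSum_pos h j).le) (mem_univ j)
    _ = 1 := this

lemma rowSum_odd (k : ℕ) (i : Fin p) : rowSum (c.X (2 * k + 1)) i = c.a i := by
  rw [X_odd]
  have h := c.good_X (2 * k)
  have hR : Rrat c.a (c.X (2 * k)) i ≠ 0 := (c.good_Rrat_pos h i).ne'
  have hr : rowSum (c.X (2 * k)) i ≠ 0 := (c.good_rowSum_pos h i).ne'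
  simp only [rowSum, TR, ← Finset.sum_div]
  rw [show (∑ j, c.X (2*k) i j) = rowSum (c.X (2*k)) i from rfl, Rrat]
  field_simp

lemma colSum_even (k : ℕ) (j : Fin q) : colSum (c.X (2 * k + 2)) j = c.b j := by
  rw [X_even]
  have h := c.good_X (2 * k + 1)
  have hC : Crat c.b (c.X (2 * k + 1)) j ≠ 0 := (c.good_Crat_pos h j).ne'
  have hc : colSum (c.X (2 * k + 1)) j ≠ 0 := (c.good_colSum_pos h j).ne'
  simp only [colSum, IPFP.TC, ← Finset.sum_div]
  rw [show (∑ i, c.X (2*k+1) i j) = colSum (c.X (2*k+1)) j from rfl, Crat]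
  field_simp

end Ctx
end IPFPAux

section Part2
open Real

variable {p q : ℕ} (c : IPFPAux.Ctx p q)
namespace IPFPAux
namespace Ctx

lemma S_nonneg (i : Fin p) (j : Fin q) : 0 ≤ c.S i j := c.hS.1.1 i j

lemma S_eq_zero {i j} (h : ¬ 0 < c.X0 i j) : c.S i j = 0 :=
  le_antisymm (not_lt.1 fun hp => h ((c.hSsupp i j).1 hp)) (c.S_nonneg i j)

lemma S_total : ∑ i, ∑ j, c.S i j = 1 := by
  have : ∀ i, ∑ j, c.S i j = c.a i := c.hS.2.1
  rw [Finset.sum_congr rfl fun i _ => this i, c.hsa]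

lemma S_entry_le_one (i : Fin p) (j : Fin q) : c.S i j ≤ 1 := by
  calc c.S i j ≤ ∑ j, c.S i j :=
        Finset.single_le_sum (fun j _ => c.S_nonneg i j) (Finset.mem_univ j)
    _ = c.a i := c.hS.2.1 i
    _ ≤ 1 := c.a_le_one i

lemma sum_if_S_row {Y : Matrix (Fin p) (Fin q) ℝ} (h : c.Good Y) (i : Fin p) :
    (∑ j, if 0 < Y i j then c.S i j else 0) = c.a i := by
  have : ∀ j, (if 0 < Y i j then c.S i j else 0) = c.S i j := by
    intro j
    by_cases hj : 0 < Y i j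
    · simp [hj]
    · simp only [hj, if_false]
      exact (c.S_eq_zero (fun hx => hj ((h.2.1 i j).2 hx))).symm
  rw [Finset.sum_congr rfl fun j _ => this j]
  exact c.hS.2.1 i

lemma sum_if_S_col {Y : Matrix (Fin p) (Fin q) ℝ} (h : c.Good Y) (j : Fin q) :
    (∑ i, if 0 < Y i j then c.S i j else 0) = c.b j := by
  have : ∀ i, (if 0 < Y i j then c.S i j else 0) = c.S i j := by
    intro i
    by_cases hi : 0 < Y i j
    · simp [hi]
    · simp only [hi, if_false]
      exact (c.S_eq_zero (fun hx => hi ((h.2.1 i j).2 hx))).symm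
  rw [Finset.sum_congr rfl fun i _ => this i]
  exact c.hS.2.2 j

lemma relEnt_TR_eq {Y : Matrix (Fin p) (Fin q) ℝ} (h : c.Good Y) :
    relEnt c.S (TR c.a Y) =
      relEnt c.S Y + ∑ i, c.a i * Real.log (Rrat c.a Y i) := by
  unfold relEnt
  rw [← Finset.sum_add_distrib]
  refine Finset.sum_congr rfl fun i _ => ?_
  have hkey : ∀ j, (if 0 < TR c.a Y i j then c.S i j * Real.log (c.S i j / TR c.a Y i j) else 0)
      = (if 0 < Y i j then c.S i j * Real.log (c.S i j / Y i j) else 0)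
        + (if 0 < Y i j then c.S i j else 0) * Real.log (Rrat c.a Y i) := by
    intro j
    have hR : 0 < Rrat c.a Y i := c.good_Rrat_pos h i
    by_cases hy : 0 < Y i j
    · have hTR : 0 < TR c.a Y i j := div_pos hy hR
      rw [if_pos hTR, if_pos hy, if_pos hy]
      rcases eq_or_lt_of_le (c.S_nonneg i j) with hs | hs
      · simp [← hs]
      · have : c.S i j / TR c.a Y i j = (c.S i j / Y i j) * Rrat c.a Y i := by
          unfold TR; field_simp
        rw [this, Real.log_mul (by positivity) hR.ne', mul_add]
    · have hy0 : Y i j = 0 := le_antisymm (not_lt.1 hy) (h.1 i j)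
      have hTR : ¬ 0 < TR c.a Y i j := by simp [TR, hy0]
      rw [if_neg hTR, if_neg hy, if_neg hy]; ring
  rw [Finset.sum_congr rfl fun j _ => hkey j, Finset.sum_add_distrib, ← Finset.sum_mul,
    c.sum_if_S_row h i]

lemma relEnt_TC_eq {Y : Matrix (Fin p) (Fin q) ℝ} (h : c.Good Y) :
    relEnt c.S (TC c.b Y) =
      relEnt c.S Y + ∑ j, c.b j * Real.log (Crat c.b Y j) := by
  unfold relEnt
  conv_lhs => rw [Finset.sum_comm]
  conv_rhs => rw [Finset.sum_comm (f := fun i j => if 0 < Y i j then c.S i j * Real.log (c.S i j / Y i j) else 0)]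
  rw [← Finset.sum_add_distrib]
  refine Finset.sum_congr rfl fun j _ => ?_
  have hkey : ∀ i, (if 0 < TC c.b Y i j then c.S i j * Real.log (c.S i j / TC c.b Y i j) else 0)
      = (if 0 < Y i j then c.S i j * Real.log (c.S i j / Y i j) else 0)
        + (if 0 < Y i j then c.S i j else 0) * Real.log (Crat c.b Y j) := by
    intro i
    have hC : 0 < Crat c.b Y j := c.good_Crat_pos h j
    by_cases hy : 0 < Y i j
    · have hTC : 0 < IPFP.TC c.b Y i j := div_pos hy hC
      rw [if_pos hTC, if_pos hy, if_pos hy]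
      rcases eq_or_lt_of_le (c.S_nonneg i j) with hs | hs
      · simp [← hs]
      · have : c.S i j / IPFP.TC c.b Y i j = (c.S i j / Y i j) * Crat c.b Y j := by
          unfold IPFP.TC; field_simp
        rw [this, Real.log_mul (by positivity) hC.ne', mul_add]
    · have hy0 : Y i j = 0 := le_antisymm (not_lt.1 hy) (h.1 i j)
      have hTC : ¬ 0 < IPFP.TC c.b Y i j := by simp [IPFP.TC, hy0]
      rw [if_neg hTC, if_neg hy, if_neg hy]; ring
  rw [Finset.sum_congr rfl fun i _ => hkey i, Finset.sum_add_distrib, ← Finset.sum_mul,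
    c.sum_if_S_col h j]

lemma sum_a_Rrat {Y : Matrix (Fin p) (Fin q) ℝ} (h : c.Good Y) :
    ∑ i, c.a i * Rrat c.a Y i = 1 := by
  have : ∀ i, c.a i * Rrat c.a Y i = rowSum Y i := by
    intro i
    have ha' : c.a i ≠ 0 := (c.ha i).ne'
    unfold Rrat; field_simp
  rw [Finset.sum_congr rfl fun i _ => this i]
  exact h.2.2

lemma sum_b_Crat {Y : Matrix (Fin p) (Fin q) ℝ} (h : c.Good Y) :
    ∑ j, c.b j * Crat c.b Y j = 1 := by
  have : ∀ j, c.b j * Crat c.b Y j = colSum Y j := by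
    intro j
    have hb' : c.b j ≠ 0 := (c.hb j).ne'
    unfold Crat; field_simp
  rw [Finset.sum_congr rfl fun j _ => this j]
  unfold colSum; rw [Finset.sum_comm]; exact h.2.2

lemma relEnt_TR_le {Y : Matrix (Fin p) (Fin q) ℝ} (h : c.Good Y) :
    relEnt c.S (TR c.a Y) ≤ relEnt c.S Y := by
  rw [c.relEnt_TR_eq h]
  have hb : ∑ i, c.a i * Real.log (Rrat c.a Y i) ≤ 0 := by
    calc ∑ i, c.a i * Real.log (Rrat c.a Y i)
        ≤ ∑ i, c.a i * (Rrat c.a Y i - 1) := by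
          refine Finset.sum_le_sum fun i _ => ?_
          exact mul_le_mul_of_nonneg_left
            (Real.log_le_sub_one_of_pos (c.good_Rrat_pos h i)) (c.ha i).le
      _ = (∑ i, c.a i * Rrat c.a Y i) - ∑ i, c.a i := by
          rw [← Finset.sum_sub_distrib]; congr 1; ext i; ring
      _ = 0 := by rw [c.sum_a_Rrat h, c.hsa]; ring
  linarith

lemma relEnt_TC_le {Y : Matrix (Fin p) (Fin q) ℝ} (h : c.Good Y) :
    relEnt c.S (TC c.b Y) ≤ relEnt c.S Y := by
  rw [c.relEnt_TC_eq h]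
  have hb : ∑ j, c.b j * Real.log (Crat c.b Y j) ≤ 0 := by
    calc ∑ j, c.b j * Real.log (Crat c.b Y j)
        ≤ ∑ j, c.b j * (Crat c.b Y j - 1) := by
          refine Finset.sum_le_sum fun j _ => ?_
          exact mul_le_mul_of_nonneg_left
            (Real.log_le_sub_one_of_pos (c.good_Crat_pos h j)) (c.hb j).le
      _ = (∑ j, c.b j * Crat c.b Y j) - ∑ j, c.b j := by
          rw [← Finset.sum_sub_distrib]; congr 1; ext j; ring
      _ = 0 := by rw [c.sum_b_Crat h, c.hsb]; ring
  linarith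

lemma relEnt_X_le (n : ℕ) : relEnt c.S (c.X n) ≤ relEnt c.S c.X0 := by
  induction n with
  | zero => exact le_refl _
  | succ n ih =>
    refine le_trans ?_ ih
    rw [X_succ]
    by_cases h : Even n
    · simpa [h] using c.relEnt_TR_le (c.good_X n)
    · simpa [h] using c.relEnt_TC_le (c.good_X n)

/-- Termwise lower bound: each relEnt term dominates `S - Y` on the support. -/
lemma relEnt_term_ge {Y : Matrix (Fin p) (Fin q) ℝ} (h : c.Good Y) (i : Fin p) (j : Fin q) :
    (if 0 < Y i j then c.S i j - Y i j else 0)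
      ≤ (if 0 < Y i j then c.S i j * Real.log (c.S i j / Y i j) else 0) := by
  by_cases hy : 0 < Y i j
  · rw [if_pos hy, if_pos hy]
    rcases eq_or_lt_of_le (c.S_nonneg i j) with hs | hs
    · rw [← hs]; simpa using hy.le
    · have hlog : Real.log (Y i j / c.S i j) ≤ Y i j / c.S i j - 1 :=
        Real.log_le_sub_one_of_pos (by positivity)
      have : c.S i j / Y i j = (Y i j / c.S i j)⁻¹ := by field_simp
      rw [this, Real.log_inv]
      have := mul_le_mul_of_nonneg_left hlog hs.le
      have h2 : c.S i j * (Y i j / c.S i j - 1) = Y i j - c.S i j := by field_simp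
      nlinarith
  · simp [hy]

lemma sum_if_Y {Y : Matrix (Fin p) (Fin q) ℝ} (h : c.Good Y) :
    ∑ ij ∈ (Finset.univ : Finset (Fin p × Fin q)),
      (if 0 < Y ij.1 ij.2 then Y ij.1 ij.2 else 0) = 1 := by
  have : ∀ ij : Fin p × Fin q, (if 0 < Y ij.1 ij.2 then Y ij.1 ij.2 else 0) = Y ij.1 ij.2 := by
    intro ij
    by_cases hy : 0 < Y ij.1 ij.2
    · simp [hy]
    · simp [hy, le_antisymm (not_lt.1 hy) (h.1 ij.1 ij.2)]
  rw [Finset.sum_congr rfl fun ij _ => this ij, Fintype.sum_prod_type]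
  exact h.2.2

lemma sum_if_S' {Y : Matrix (Fin p) (Fin q) ℝ} (h : c.Good Y) :
    ∑ ij ∈ (Finset.univ : Finset (Fin p × Fin q)),
      (if 0 < Y ij.1 ij.2 then c.S ij.1 ij.2 else 0) = 1 := by
  have : ∀ ij : Fin p × Fin q, (if 0 < Y ij.1 ij.2 then c.S ij.1 ij.2 else 0) = c.S ij.1 ij.2 := by
    intro ij
    by_cases hy : 0 < Y ij.1 ij.2
    · simp [hy]
    · simp only [hy, if_false]
      exact (c.S_eq_zero (fun hx => hy ((h.2.1 ij.1 ij.2).2 hx))).symm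
  rw [Finset.sum_congr rfl fun ij _ => this ij, Fintype.sum_prod_type]
  exact c.S_total

lemma relEnt_as_prod {Y : Matrix (Fin p) (Fin q) ℝ} :
    relEnt c.S Y = ∑ ij ∈ (Finset.univ : Finset (Fin p × Fin q)),
      (if 0 < Y ij.1 ij.2 then c.S ij.1 ij.2 * Real.log (c.S ij.1 ij.2 / Y ij.1 ij.2) else 0) := by
  unfold relEnt
  exact (Fintype.sum_prod_type
    (f := fun ij : Fin p × Fin q =>
      if 0 < Y ij.1 ij.2 then c.S ij.1 ij.2 * Real.log (c.S ij.1 ij.2 / Y ij.1 ij.2) else 0)).symm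

lemma relEnt_S_nonneg {Y : Matrix (Fin p) (Fin q) ℝ} (h : c.Good Y) :
    0 ≤ relEnt c.S Y := by
  rw [relEnt_as_prod]
  have : ∑ ij ∈ (Finset.univ : Finset (Fin p × Fin q)),
      ((if 0 < Y ij.1 ij.2 then c.S ij.1 ij.2 else 0) -
        (if 0 < Y ij.1 ij.2 then Y ij.1 ij.2 else 0)) = 0 := by
    rw [Finset.sum_sub_distrib, c.sum_if_S' h, c.sum_if_Y h]; ring
  calc (0:ℝ) = _ := this.symm
    _ ≤ _ := by
        refine Finset.sum_le_sum fun ij _ => ?_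
        have := c.relEnt_term_ge h ij.1 ij.2
        by_cases hy : 0 < Y ij.1 ij.2 <;> simp [hy] at this ⊢ <;> linarith

end Ctx
end IPFPAux
end Part2

namespace IPFPAux
namespace Ctx
open Finset

variable {p q : ℕ} (c : Ctx p q)

noncomputable def Epairs : Finset (Fin p × Fin q) :=
  Finset.univ.filter (fun ij => 0 < c.X0 ij.1 ij.2)

lemma mem_Epairs {ij : Fin p × Fin q} : ij ∈ c.Epairs ↔ 0 < c.X0 ij.1 ij.2 := by
  simp [Epairs]

lemma Epairs_nonempty : c.Epairs.Nonempty := by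
  obtain ⟨j, hj⟩ := c.exists_pos_in_row ⟨0, c.hp⟩
  exact ⟨(⟨0, c.hp⟩, j), by simp [Epairs, hj]⟩

noncomputable def Bconst : ℝ := relEnt c.S c.X0 + 1

lemma Bconst_pos : 0 < c.Bconst := by
  have := c.relEnt_S_nonneg c.good_X0
  unfold Bconst; linarith

noncomputable def delta : ℝ :=
  c.Epairs.inf' c.Epairs_nonempty
    (fun ij => c.S ij.1 ij.2 * Real.exp (-c.Bconst / c.S ij.1 ij.2))

lemma delta_pos : 0 < c.delta := by
  rw [delta, Finset.lt_inf'_iff]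
  intro ij hij
  have hS : 0 < c.S ij.1 ij.2 := (c.hSsupp _ _).2 ((c.mem_Epairs).1 hij)
  positivity

lemma delta_le_one : c.delta ≤ 1 := by
  obtain ⟨ij, hij⟩ := c.Epairs_nonempty
  refine le_trans (Finset.inf'_le _ hij) ?_
  have hS : 0 < c.S ij.1 ij.2 := (c.hSsupp _ _).2 ((c.mem_Epairs).1 hij)
  have h1 : Real.exp (-c.Bconst / c.S ij.1 ij.2) ≤ 1 := by
    rw [← Real.exp_zero]
    refine Real.exp_le_exp.2 ?_
    have := c.Bconst_pos
    have : -c.Bconst / c.S ij.1 ij.2 ≤ 0 := by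
      apply div_nonpos_of_nonpos_of_nonneg <;> linarith
    linarith
  calc c.S ij.1 ij.2 * Real.exp (-c.Bconst / c.S ij.1 ij.2)
      ≤ c.S ij.1 ij.2 * 1 := by
        exact mul_le_mul_of_nonneg_left h1 hS.le
    _ ≤ 1 := by rw [mul_one]; exact c.S_entry_le_one _ _

set_option maxHeartbeats 1000000 in
lemma delta_le_entry {Y : Matrix (Fin p) (Fin q) ℝ} (h : c.Good Y)
    (hD : relEnt c.S Y ≤ relEnt c.S c.X0)
    {i : Fin p} {j : Fin q} (hij : 0 < c.X0 i j) : c.delta ≤ Y i j := by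
  have hy : 0 < Y i j := (h.2.1 i j).2 hij
  have hSij : 0 < c.S i j := (c.hSsupp i j).2 hij
  set f : Fin p × Fin q → ℝ := fun kl =>
    if 0 < Y kl.1 kl.2 then c.S kl.1 kl.2 * Real.log (c.S kl.1 kl.2 / Y kl.1 kl.2) else 0 with hf
  set g : Fin p × Fin q → ℝ := fun kl =>
    (if 0 < Y kl.1 kl.2 then c.S kl.1 kl.2 else 0)
      - (if 0 < Y kl.1 kl.2 then Y kl.1 kl.2 else 0) with hg
  have hsumg : ∑ kl, g kl = 0 := by
    rw [hg, Finset.sum_sub_distrib, c.sum_if_S' h, c.sum_if_Y h]; ring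
  have hfg : ∀ kl : Fin p × Fin q, g kl ≤ f kl := by
    intro kl
    have := c.relEnt_term_ge h kl.1 kl.2
    by_cases hy' : 0 < Y kl.1 kl.2 <;> simp only [hf, hg, hy', if_true, if_false] at this ⊢ <;>
      [linarith; linarith]
  have hij' : (i, j) ∈ (Finset.univ : Finset (Fin p × Fin q)) := mem_univ _
  have hsplit : f (i, j) + ∑ kl ∈ Finset.univ.erase (i, j), f kl = relEnt c.S Y := by
    rw [c.relEnt_as_prod]
    exact Finset.add_sum_erase _ f hij'
  have h2 : g (i, j) + ∑ kl ∈ Finset.univ.erase (i, j), g kl = 0 := by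
    rw [Finset.add_sum_erase _ g hij']; exact hsumg
  have h3 : ∑ kl ∈ Finset.univ.erase (i, j), g kl ≤ ∑ kl ∈ Finset.univ.erase (i, j), f kl :=
    Finset.sum_le_sum fun kl _ => hfg kl
  have hfij : f (i, j) = c.S i j * Real.log (c.S i j / Y i j) := by simp [hf, hy]
  have hgij : g (i, j) = c.S i j - Y i j := by simp [hg, hy]
  have h5 : c.S i j * Real.log (c.S i j / Y i j) ≤ c.Bconst := by
    have hS1 := c.S_entry_le_one i j
    have : f (i, j) ≤ relEnt c.S Y + g (i, j) := by linarith
    rw [hfij, hgij] at this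
    unfold Bconst
    linarith
  have h6 : Real.log (c.S i j / Y i j) ≤ c.Bconst / c.S i j := by
    rw [le_div_iff₀ hSij]
    linarith [h5]
  have h7 : c.S i j / Y i j ≤ Real.exp (c.Bconst / c.S i j) := by
    rw [← Real.exp_log (show (0:ℝ) < c.S i j / Y i j by positivity)]
    exact Real.exp_le_exp.2 h6
  have h8 : c.S i j * Real.exp (-c.Bconst / c.S i j) ≤ Y i j := by
    have he : (0:ℝ) < Real.exp (c.Bconst / c.S i j) := Real.exp_pos _
    have h7' : c.S i j ≤ Real.exp (c.Bconst / c.S i j) * Y i j := by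
      rw [div_le_iff₀ hy] at h7; linarith
    have hexp : Real.exp (-c.Bconst / c.S i j) = (Real.exp (c.Bconst / c.S i j))⁻¹ := by
      rw [neg_div, Real.exp_neg]
    rw [hexp]
    have hmul := mul_le_mul_of_nonneg_right h7' (inv_nonneg.2 he.le)
    rwa [mul_comm (Real.exp (c.Bconst / c.S i j)) (Y i j), mul_assoc,
      mul_inv_cancel₀ he.ne', mul_one] at hmul
  have hmem : (i, j) ∈ c.Epairs := (c.mem_Epairs).2 hij
  refine le_trans (Finset.inf'_le _ hmem) ?_
  exact h8

lemma delta_le_X (n : ℕ) {i : Fin p} {j : Fin q} (hij : 0 < c.X0 i j) :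
    c.delta ≤ c.X n i j :=
  c.delta_le_entry (c.good_X n) (c.relEnt_X_le n) hij

end Ctx
end IPFPAux

namespace IPFPAux
namespace Ctx
open Finset

variable {p q : ℕ} (c : Ctx p q)

/-- Column ratios of the odd IPFP iterates: the central quantity. -/
noncomputable def r (n : ℕ) (j : Fin q) : ℝ := Crat c.b (c.X (2 * n + 1)) j

lemma r_pos (n : ℕ) (j : Fin q) : 0 < c.r n j :=
  c.good_Crat_pos (c.good_X (2 * n + 1)) j

lemma colSum_odd_eq (n : ℕ) (j : Fin q) :
    colSum (c.X (2 * n + 1)) j = c.r n j * c.b j := by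
  unfold r Crat
  rw [div_mul_cancel₀ _ (c.hb j).ne']

lemma r_ge_delta (n : ℕ) (j : Fin q) : c.delta ≤ c.r n j := by
  obtain ⟨i, hi⟩ := c.exists_pos_in_col j
  have h1 : c.delta ≤ c.X (2 * n + 1) i j := c.delta_le_X _ hi
  have h2 : c.X (2 * n + 1) i j ≤ colSum (c.X (2 * n + 1)) j :=
    Finset.single_le_sum (fun i _ => (c.good_X (2 * n + 1)).1 i j) (mem_univ i)
  have h3 : colSum (c.X (2 * n + 1)) j ≤ c.r n j := by
    rw [c.colSum_odd_eq n j]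
    nlinarith [c.b_le_one j, c.hb j, (c.r_pos n j)]
  linarith

/-- Row-stochastic weights. -/
noncomputable def t (n : ℕ) (i : Fin p) (l : Fin q) : ℝ := c.X (2 * n + 1) i l / c.a i

/-- Column-stochastic weights. -/
noncomputable def w (n : ℕ) (i : Fin p) (j : Fin q) : ℝ :=
  c.X (2 * n + 1) i j / colSum (c.X (2 * n + 1)) j

lemma t_nonneg (n : ℕ) (i : Fin p) (l : Fin q) : 0 ≤ c.t n i l :=
  div_nonneg ((c.good_X _).1 i l) (c.ha i).le

lemma w_nonneg (n : ℕ) (i : Fin p) (j : Fin q) : 0 ≤ c.w n i j :=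
  div_nonneg ((c.good_X _).1 i j) (c.good_colSum_pos (c.good_X _) j).le

lemma t_pos_iff (n : ℕ) (i : Fin p) (l : Fin q) : 0 < c.t n i l ↔ 0 < c.X0 i l := by
  rw [← (c.good_X (2 * n + 1)).2.1 i l]
  unfold t
  constructor
  · intro h
    by_contra hx
    have : c.X (2 * n + 1) i l = 0 := le_antisymm (not_lt.1 hx) ((c.good_X _).1 i l)
    simp [this] at h
  · intro h; exact div_pos h (c.ha i)

lemma w_pos_iff (n : ℕ) (i : Fin p) (j : Fin q) : 0 < c.w n i j ↔ 0 < c.X0 i j := by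
  rw [← (c.good_X (2 * n + 1)).2.1 i j]
  unfold w
  constructor
  · intro h
    by_contra hx
    have : c.X (2 * n + 1) i j = 0 := le_antisymm (not_lt.1 hx) ((c.good_X _).1 i j)
    simp [this] at h
  · intro h; exact div_pos h (c.good_colSum_pos (c.good_X _) j)

lemma sum_t (n : ℕ) (i : Fin p) : ∑ l, c.t n i l = 1 := by
  unfold t
  rw [← Finset.sum_div]
  rw [show (∑ l, c.X (2 * n + 1) i l) = rowSum (c.X (2 * n + 1)) i from rfl,
    c.rowSum_odd n i]
  exact div_self (c.ha i).ne'

lemma sum_w (n : ℕ) (j : Fin q) : ∑ i, c.w n i j = 1 := by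
  unfold w
  rw [← Finset.sum_div]
  rw [show (∑ i, c.X (2 * n + 1) i j) = colSum (c.X (2 * n + 1)) j from rfl]
  field_simp [(c.good_colSum_pos (c.good_X _) j).ne']

lemma t_ge_delta (n : ℕ) {i : Fin p} {l : Fin q} (h : 0 < c.X0 i l) :
    c.delta ≤ c.t n i l := by
  have h1 : c.delta ≤ c.X (2 * n + 1) i l := c.delta_le_X _ h
  have h2 : c.X (2 * n + 1) i l ≤ c.t n i l := by
    unfold t
    rw [le_div_iff₀ (c.ha i)]
    nlinarith [(c.good_X (2*n+1)).1 i l, c.a_le_one i]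
  linarith

lemma w_ge_delta (n : ℕ) {i : Fin p} {j : Fin q} (h : 0 < c.X0 i j) :
    c.delta ≤ c.w n i j := by
  have h1 : c.delta ≤ c.X (2 * n + 1) i j := c.delta_le_X _ h
  have hc : 0 < colSum (c.X (2 * n + 1)) j := c.good_colSum_pos (c.good_X _) j
  have hc1 : colSum (c.X (2 * n + 1)) j ≤ 1 := c.colSum_le_one (c.good_X _) j
  have h2 : c.X (2 * n + 1) i j ≤ c.w n i j := by
    unfold w
    rw [le_div_iff₀ hc]
    nlinarith [(c.good_X (2*n+1)).1 i j]
  linarith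

lemma Rrat_even_eq (n : ℕ) (i : Fin p) :
    Rrat c.a (c.X (2 * n + 2)) i = ∑ l, c.t n i l * (c.r n l)⁻¹ := by
  rw [X_even]
  unfold Rrat rowSum IPFP.TC
  rw [Finset.sum_div]
  refine Finset.sum_congr rfl fun l _ => ?_
  show c.X (2*n+1) i l / Crat c.b (c.X (2*n+1)) l / c.a i = c.t n i l * (c.r n l)⁻¹
  unfold t
  rw [show Crat c.b (c.X (2*n+1)) l = c.r n l from rfl]
  have := (c.r_pos n l).ne'
  have := (c.ha i).ne'
  field_simp
  try simp

lemma Rrat_even_pos (n : ℕ) (i : Fin p) : 0 < Rrat c.a (c.X (2 * n + 2)) i :=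
  c.good_Rrat_pos (c.good_X _) i

lemma r_succ (n : ℕ) (j : Fin q) :
    c.r (n + 1) j = ∑ i, c.w n i j * (Rrat c.a (c.X (2 * n + 2)) i)⁻¹ := by
  unfold r
  rw [show 2 * (n + 1) + 1 = (2 * n + 2) + 1 from by ring]
  have h1 : c.X ((2 * n + 2) + 1) = TR c.a (c.X (2 * n + 2)) := by
    have h := c.X_odd (n + 1)
    rw [show 2 * (n + 1) + 1 = (2 * n + 2) + 1 from by ring,
      show 2 * (n + 1) = 2 * n + 2 from by ring] at h
    exact h
  rw [h1]
  unfold Crat colSum IPFP.TR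
  rw [Finset.sum_div]
  refine Finset.sum_congr rfl fun i _ => ?_
  have hX2 : c.X (2 * n + 2) i j = c.X (2 * n + 1) i j / c.r n j := by
    rw [c.X_even n]; rfl
  rw [hX2]
  unfold w
  rw [c.colSum_odd_eq n j]
  have h3 := (c.r_pos n j).ne'
  have h4 := (c.hb j).ne'
  have h5 := (c.Rrat_even_pos n i).ne'
  field_simp
  try simp

end Ctx
end IPFPAux

namespace IPFPAux
open Finset

/-- Weighted average is at most the max of participating values. -/
lemma avg_le_max {ι : Type*} [Fintype ι] (w x : ι → ℝ) (M : ℝ)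
    (hw : ∀ i, 0 ≤ w i) (hsum : ∑ i, w i = 1) (hx : ∀ i, 0 < w i → x i ≤ M) :
    ∑ i, w i * x i ≤ M := by
  calc ∑ i, w i * x i ≤ ∑ i, w i * M := by
        refine Finset.sum_le_sum fun i _ => ?_
        rcases eq_or_lt_of_le (hw i) with h | h
        · rw [← h]; simp
        · exact mul_le_mul_of_nonneg_left (hx i h) (hw i)
    _ = M := by rw [← Finset.sum_mul, hsum, one_mul]

/-- Weighted average is at least the min of participating values. -/
lemma min_le_avg {ι : Type*} [Fintype ι] (w x : ι → ℝ) (m : ℝ)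
    (hw : ∀ i, 0 ≤ w i) (hsum : ∑ i, w i = 1) (hx : ∀ i, 0 < w i → m ≤ x i) :
    m ≤ ∑ i, w i * x i := by
  calc m = ∑ i, w i * m := by rw [← Finset.sum_mul, hsum, one_mul]
    _ ≤ ∑ i, w i * x i := by
        refine Finset.sum_le_sum fun i _ => ?_
        rcases eq_or_lt_of_le (hw i) with h | h
        · rw [← h]; simp
        · exact mul_le_mul_of_nonneg_left (hx i h) (hw i)

/-- Weighted average with one term gaining `g` below the max `M`. -/
lemma avg_le_max_sub_gain {ι : Type*} [Fintype ι] [DecidableEq ι] (w x : ι → ℝ) (M g ε : ℝ) (i0 : ι)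
    (hw : ∀ i, 0 ≤ w i) (hsum : ∑ i, w i = 1) (hx : ∀ i, 0 < w i → x i ≤ M)
    (hε : 0 < ε) (hwi0 : ε ≤ w i0) (hg : 0 ≤ g) (hx0 : x i0 ≤ M - g) :
    ∑ i, w i * x i ≤ M - ε * g := by
  have h1 : w i0 * x i0 + ∑ i ∈ Finset.univ.erase i0, w i * x i = ∑ i, w i * x i :=
    Finset.add_sum_erase _ (fun i => w i * x i) (mem_univ i0)
  have h3 : w i0 + ∑ i ∈ Finset.univ.erase i0, w i = 1 := by
    rw [Finset.add_sum_erase _ _ (mem_univ i0)]; exact hsum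
  have h2 : ∑ i ∈ Finset.univ.erase i0, w i * x i
      ≤ ∑ i ∈ Finset.univ.erase i0, w i * M := by
    refine Finset.sum_le_sum fun i _ => ?_
    rcases eq_or_lt_of_le (hw i) with h | h
    · rw [← h]; simp
    · exact mul_le_mul_of_nonneg_left (hx i h) (hw i)
  have h4 : ∑ i ∈ Finset.univ.erase i0, w i * M = (1 - w i0) * M := by
    rw [← Finset.sum_mul]; rw [show (∑ i ∈ Finset.univ.erase i0, w i) = 1 - w i0 by linarith]
  have h5 : w i0 * x i0 ≤ w i0 * (M - g) :=
    mul_le_mul_of_nonneg_left hx0 (hw i0)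
  nlinarith [mul_le_mul_of_nonneg_right hwi0 hg]

/-- The harmonic-mean gain inequality. -/
lemma inv_le_max_sub_gain (Sv M g ε : ℝ) (hM : 0 < M) (hg : 0 ≤ g) (hgM : g < M)
    (hε : 0 < ε) (hε1 : ε ≤ 1)
    (hS : (1 - ε) / M + ε / (M - g) ≤ Sv) : Sv⁻¹ ≤ M - ε * g := by
  have h0 : 0 < M - g := by linarith
  have h1 : 0 < M - (1 - ε) * g := by nlinarith
  have heq : (1 - ε) / M + ε / (M - g) = (M - (1 - ε) * g) / (M * (M - g)) := by
    field_simp; ring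
  rw [heq] at hS
  have hSpos : 0 < (M - (1 - ε) * g) / (M * (M - g)) := by positivity
  have h2 : Sv⁻¹ ≤ ((M - (1 - ε) * g) / (M * (M - g)))⁻¹ :=
    inv_anti₀ hSpos hS
  refine le_trans h2 ?_
  rw [inv_div, div_le_iff₀ h1]
  nlinarith [mul_nonneg (mul_nonneg hε.le (sub_nonneg.2 hε1)) (mul_nonneg hg hg)]

namespace Ctx
variable {p q : ℕ} (c : Ctx p q)

/-- Column adjacency through a common positive row entry of `X0`. -/
def Adj (j l : Fin q) : Prop := ∃ i, 0 < c.X0 i j ∧ 0 < c.X0 i l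

lemma adj_refl (j : Fin q) : c.Adj j j := by
  obtain ⟨i, hi⟩ := c.exists_pos_in_col j
  exact ⟨i, hi, hi⟩

lemma adj_symm {j l : Fin q} : c.Adj j l → c.Adj l j := fun ⟨i, h1, h2⟩ => ⟨i, h2, h1⟩

/-- Same connected component of the column graph. -/
def Related (j l : Fin q) : Prop := Relation.ReflTransGen c.Adj j l

lemma related_refl (j : Fin q) : c.Related j j := Relation.ReflTransGen.refl

lemma related_trans {i j k : Fin q} (h1 : c.Related i j) (h2 : c.Related j k) :
    c.Related i k := Relation.ReflTransGen.trans h1 h2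

lemma related_symm {j l : Fin q} (h : c.Related j l) : c.Related l j := by
  have hsym : Symmetric c.Adj := fun _ _ h => c.adj_symm h
  induction h with
  | refl => exact Relation.ReflTransGen.refl
  | tail _ hab ih => exact Relation.ReflTransGen.head (c.adj_symm hab) ih

lemma related_of_adj {j l : Fin q} (h : c.Adj j l) : c.Related j l :=
  Relation.ReflTransGen.single h

open Classical in
/-- The component of a column as a finset. -/
noncomputable def Block (j : Fin q) : Finset (Fin q) := Finset.univ.filter (c.Related j)

lemma mem_Block {j l : Fin q} : l ∈ c.Block j ↔ c.Related j l := by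
  simp [Block]

lemma self_mem_Block (j : Fin q) : j ∈ c.Block j := c.mem_Block.2 (c.related_refl j)

lemma Block_nonempty (j : Fin q) : (c.Block j).Nonempty := ⟨j, c.self_mem_Block j⟩

lemma Block_eq_of_related {j l : Fin q} (h : c.Related j l) : c.Block j = c.Block l := by
  ext m
  simp only [mem_Block]
  exact ⟨fun hm => c.related_trans (c.related_symm h) hm,
    fun hm => c.related_trans h hm⟩

/-- Max of `r n` over the component of `j`. -/
noncomputable def Mx (n : ℕ) (j : Fin q) : ℝ := (c.Block j).sup' (c.Block_nonempty j) (c.r n)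

/-- Min of `r n` over the component of `j`. -/
noncomputable def mn (n : ℕ) (j : Fin q) : ℝ := (c.Block j).inf' (c.Block_nonempty j) (c.r n)

lemma r_le_Mx {n : ℕ} {j l : Fin q} (h : l ∈ c.Block j) : c.r n l ≤ c.Mx n j :=
  Finset.le_sup' _ h

lemma mn_le_r {n : ℕ} {j l : Fin q} (h : l ∈ c.Block j) : c.mn n j ≤ c.r n l :=
  Finset.inf'_le _ h

lemma delta_le_mn (n : ℕ) (j : Fin q) : c.delta ≤ c.mn n j := by
  rw [mn, Finset.le_inf'_iff]
  exact fun l _ => c.r_ge_delta n l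

lemma mn_pos (n : ℕ) (j : Fin q) : 0 < c.mn n j :=
  lt_of_lt_of_le c.delta_pos (c.delta_le_mn n j)

lemma mn_le_Mx (n : ℕ) (j : Fin q) : c.mn n j ≤ c.Mx n j :=
  le_trans (c.mn_le_r (c.self_mem_Block j)) (c.r_le_Mx (c.self_mem_Block j))

lemma Mx_eq_of_related {n : ℕ} {j l : Fin q} (h : c.Related j l) : c.Mx n j = c.Mx n l := by
  unfold Mx
  congr 1
  exact c.Block_eq_of_related h

lemma mn_eq_of_related {n : ℕ} {j l : Fin q} (h : c.Related j l) : c.mn n j = c.mn n l := by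
  unfold mn
  congr 1
  exact c.Block_eq_of_related h

lemma exists_Mx (n : ℕ) (j : Fin q) : ∃ l ∈ c.Block j, c.Mx n j = c.r n l :=
  Finset.exists_mem_eq_sup' _ _

lemma exists_mn (n : ℕ) (j : Fin q) : ∃ l ∈ c.Block j, c.mn n j = c.r n l :=
  Finset.exists_mem_eq_inf' _ _

open Classical in
/-- Columns reachable from `l0` in at most `m` adjacency steps. -/
noncomputable def reach (l0 : Fin q) : ℕ → Finset (Fin q)
  | 0 => {l0}
  | m + 1 => Finset.univ.filter (fun j => ∃ l ∈ reach l0 m, c.Adj j l)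

lemma mem_reach_succ {l0 j : Fin q} {m : ℕ} :
    j ∈ c.reach l0 (m + 1) ↔ ∃ l ∈ c.reach l0 m, c.Adj j l := by
  rw [reach]; simp

lemma reach_mono (l0 : Fin q) (m : ℕ) : c.reach l0 m ⊆ c.reach l0 (m + 1) := by
  intro j hj
  exact c.mem_reach_succ.2 ⟨j, hj, c.adj_refl j⟩

lemma reach_le {l0 : Fin q} {m m' : ℕ} (h : m ≤ m') : c.reach l0 m ⊆ c.reach l0 m' := by
  induction m' with
  | zero => rw [Nat.le_zero.1 h]
  | succ m' ih =>
    rcases Nat.lt_or_ge m (m' + 1) with h' | h'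
    · exact subset_trans (ih (Nat.lt_succ_iff.1 h')) (c.reach_mono l0 m')
    · rw [le_antisymm h h']

lemma reach_subset_block (l0 : Fin q) (m : ℕ) : c.reach l0 m ⊆ c.Block l0 := by
  induction m with
  | zero =>
    intro j hj
    rw [reach, Finset.mem_singleton] at hj
    rw [hj]; exact c.self_mem_Block l0
  | succ m ih =>
    intro j hj
    obtain ⟨l, hl, hadj⟩ := c.mem_reach_succ.1 hj
    have := c.mem_Block.1 (ih hl)
    exact c.mem_Block.2 (c.related_trans this (c.related_of_adj (c.adj_symm hadj)))

lemma reach_stab_step {l0 : Fin q} {m : ℕ} (h : c.reach l0 m = c.reach l0 (m + 1)) :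
    c.reach l0 (m + 1) = c.reach l0 (m + 2) := by
  ext j
  rw [mem_reach_succ, show m + 2 = (m + 1) + 1 from rfl, mem_reach_succ, h]

lemma reach_stab_ge {l0 : Fin q} {m : ℕ} (h : c.reach l0 m = c.reach l0 (m + 1)) :
    ∀ k, c.reach l0 (m + k) = c.reach l0 m := by
  intro k
  induction k with
  | zero => rfl
  | succ k ih =>
    have hk : c.reach l0 (m + k + 1) = c.reach l0 (m + 1) := by
      ext j
      rw [mem_reach_succ, mem_reach_succ, ih]
    rw [show m + (k+1) = (m + k) + 1 from rfl, hk, ← h]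

lemma reach_card_ge {l0 : Fin q} (m : ℕ)
    (h : ∀ m' < m, c.reach l0 m' ≠ c.reach l0 (m' + 1)) :
    m + 1 ≤ (c.reach l0 m).card := by
  induction m with
  | zero => simp [reach]
  | succ m ih =>
    have h1 : m + 1 ≤ (c.reach l0 m).card :=
      ih (fun m' hm' => h m' (Nat.lt_succ_of_lt hm'))
    have h2 : c.reach l0 m ⊂ c.reach l0 (m + 1) :=
      (Finset.ssubset_iff_subset_ne).2 ⟨c.reach_mono l0 m, h m (Nat.lt_succ_self m)⟩
    have := Finset.card_lt_card h2
    omega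

lemma reach_q_stab (l0 : Fin q) : c.reach l0 q = c.reach l0 (q + 1) := by
  by_cases hstab : ∃ m < q, c.reach l0 m = c.reach l0 (m + 1)
  · obtain ⟨m, hm, h⟩ := hstab
    have h1 := c.reach_stab_ge h (q - m)
    have h2 := c.reach_stab_ge h (q + 1 - m)
    rw [show m + (q - m) = q from by omega] at h1
    rw [show m + (q + 1 - m) = q + 1 from by omega] at h2
    rw [h1, h2]
  · push_neg at hstab
    have := c.reach_card_ge q hstab
    have hcard : (c.reach l0 q).card ≤ q := by
      calc (c.reach l0 q).card ≤ (Finset.univ : Finset (Fin q)).card :=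
            Finset.card_le_card (Finset.subset_univ _)
        _ = q := by simp
    omega

lemma mem_reach_q_of_related {l0 j : Fin q} (h : c.Related l0 j) : j ∈ c.reach l0 q := by
  induction h with
  | refl =>
    exact c.reach_le (Nat.zero_le q) (by rw [reach]; exact Finset.mem_singleton_self l0)
  | tail hab hbc ih =>
    have : _ ∈ c.reach l0 (q + 1) := c.mem_reach_succ.2 ⟨_, ih, c.adj_symm hbc⟩
    rwa [← c.reach_q_stab l0] at this

end Ctx
end IPFPAux

namespace IPFPAux

/-- Mirror gain lemma for lower bounds of averages. -/
lemma gain_avg_ge {ι : Type*} [Fintype ι] [DecidableEq ι] (w x : ι → ℝ) (A Bv ε : ℝ) (i0 : ι)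
    (hw : ∀ i, 0 ≤ w i) (hsum : ∑ i, w i = 1) (hx : ∀ i, 0 < w i → A ≤ x i)
    (hε : 0 < ε) (hwi0 : ε ≤ w i0) (hAB : A ≤ Bv) (hx0 : Bv ≤ x i0) :
    (1 - ε) * A + ε * Bv ≤ ∑ i, w i * x i := by
  have h1 : w i0 * x i0 + ∑ i ∈ Finset.univ.erase i0, w i * x i = ∑ i, w i * x i :=
    Finset.add_sum_erase _ (fun i => w i * x i) (Finset.mem_univ i0)
  have h3 : w i0 + ∑ i ∈ Finset.univ.erase i0, w i = 1 := by
    rw [Finset.add_sum_erase _ _ (Finset.mem_univ i0)]; exact hsum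
  have h2 : ∑ i ∈ Finset.univ.erase i0, w i * A
      ≤ ∑ i ∈ Finset.univ.erase i0, w i * x i := by
    refine Finset.sum_le_sum fun i _ => ?_
    rcases eq_or_lt_of_le (hw i) with h | h
    · rw [← h]; simp
    · exact mul_le_mul_of_nonneg_left (hx i h) (hw i)
  have h4 : ∑ i ∈ Finset.univ.erase i0, w i * A = (1 - w i0) * A := by
    rw [← Finset.sum_mul, show (∑ i ∈ Finset.univ.erase i0, w i) = 1 - w i0 by linarith]
  have h5 : w i0 * Bv ≤ w i0 * x i0 := mul_le_mul_of_nonneg_left hx0 (hw i0)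
  nlinarith [mul_le_mul_of_nonneg_right hwi0 (sub_nonneg.2 hAB)]

namespace Ctx
variable {p q : ℕ} (c : Ctx p q)

/-- Key structural bound: `(R_i(X_{2n+2}))⁻¹` lies in the current interval of the block
of any column `j` adjacent to row `i`. -/
lemma Rinv_mem {n : ℕ} {i : Fin p} {j : Fin q} (hij : 0 < c.X0 i j) :
    c.mn n j ≤ (Rrat c.a (c.X (2 * n + 2)) i)⁻¹ ∧
      (Rrat c.a (c.X (2 * n + 2)) i)⁻¹ ≤ c.Mx n j := by
  have hmn := c.mn_pos n j
  have hMx : 0 < c.Mx n j := lt_of_lt_of_le hmn (c.mn_le_Mx n j)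
  have hx : ∀ l, 0 < c.t n i l →
      (c.Mx n j)⁻¹ ≤ (c.r n l)⁻¹ ∧ (c.r n l)⁻¹ ≤ (c.mn n j)⁻¹ := by
    intro l hl
    have hil : 0 < c.X0 i l := (c.t_pos_iff n i l).1 hl
    have hmem : l ∈ c.Block j := c.mem_Block.2 (c.related_of_adj ⟨i, hij, hil⟩)
    constructor
    · exact inv_anti₀ (c.r_pos n l) (c.r_le_Mx hmem)
    · exact inv_anti₀ hmn (c.mn_le_r hmem)
  have hR : Rrat c.a (c.X (2 * n + 2)) i = ∑ l, c.t n i l * (c.r n l)⁻¹ :=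
    c.Rrat_even_eq n i
  have hlo : (c.Mx n j)⁻¹ ≤ Rrat c.a (c.X (2 * n + 2)) i := by
    rw [hR]
    exact min_le_avg _ _ _ (c.t_nonneg n i) (c.sum_t n i) (fun l hl => (hx l hl).1)
  have hhi : Rrat c.a (c.X (2 * n + 2)) i ≤ (c.mn n j)⁻¹ := by
    rw [hR]
    exact avg_le_max _ _ _ (c.t_nonneg n i) (c.sum_t n i) (fun l hl => (hx l hl).2)
  constructor
  · calc c.mn n j = ((c.mn n j)⁻¹)⁻¹ := by rw [inv_inv]
      _ ≤ (Rrat c.a (c.X (2 * n + 2)) i)⁻¹ := inv_anti₀ (c.Rrat_even_pos n i) hhi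
  · calc (Rrat c.a (c.X (2 * n + 2)) i)⁻¹ ≤ ((c.Mx n j)⁻¹)⁻¹ :=
        inv_anti₀ (by positivity) hlo
      _ = c.Mx n j := by rw [inv_inv]

lemma r_succ_mem (n : ℕ) (j : Fin q) :
    c.mn n j ≤ c.r (n + 1) j ∧ c.r (n + 1) j ≤ c.Mx n j := by
  have hR := c.r_succ n j
  constructor
  · rw [hR]
    refine min_le_avg _ _ _ (c.w_nonneg n · j) (c.sum_w n j) fun i hi => ?_
    exact (c.Rinv_mem ((c.w_pos_iff n i j).1 hi)).1
  · rw [hR]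
    refine avg_le_max _ _ _ (c.w_nonneg n · j) (c.sum_w n j) fun i hi => ?_
    exact (c.Rinv_mem ((c.w_pos_iff n i j).1 hi)).2

lemma Mx_succ_le (n : ℕ) (j : Fin q) : c.Mx (n + 1) j ≤ c.Mx n j := by
  rw [Mx, Finset.sup'_le_iff]
  intro l hl
  rw [c.Mx_eq_of_related (c.mem_Block.1 hl)]
  exact (c.r_succ_mem n l).2

lemma mn_succ_ge (n : ℕ) (j : Fin q) : c.mn n j ≤ c.mn (n + 1) j := by
  rw [show c.mn (n+1) j = (c.Block j).inf' (c.Block_nonempty j) (c.r (n+1)) from rfl,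
    Finset.le_inf'_iff]
  intro l hl
  rw [c.mn_eq_of_related (c.mem_Block.1 hl)]
  exact (c.r_succ_mem n l).1

lemma Mx_add_le (n k : ℕ) (j : Fin q) : c.Mx (n + k) j ≤ c.Mx n j := by
  induction k with
  | zero => exact le_refl _
  | succ k ih => exact le_trans (c.Mx_succ_le (n + k) j) ih

lemma mn_add_ge (n k : ℕ) (j : Fin q) : c.mn n j ≤ c.mn (n + k) j := by
  induction k with
  | zero => exact le_refl _
  | succ k ih => exact le_trans ih (c.mn_succ_ge (n + k) j)

end Ctx
end IPFPAux

namespace IPFPAux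
namespace Ctx
variable {p q : ℕ} (c : Ctx p q)

lemma delta_pow_le_one (k : ℕ) : c.delta ^ k ≤ 1 :=
  pow_le_one₀ c.delta_pos.le c.delta_le_one

lemma gain_propagation (n : ℕ) (j0 l0 : Fin q) (hl0 : l0 ∈ c.Block j0)
    (hval : c.r n l0 = c.mn n j0) :
    ∀ m, ∀ j ∈ c.reach l0 m,
      c.r (n + m) j ≤ c.Mx n j0 - c.delta ^ (2 * m) * (c.Mx n j0 - c.mn n j0) := by
  have hδ := c.delta_pos
  have hδ1 := c.delta_le_one
  have hmn := c.mn_pos n j0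
  have hMx : 0 < c.Mx n j0 := lt_of_lt_of_le hmn (c.mn_le_Mx n j0)
  have hDnn : 0 ≤ c.Mx n j0 - c.mn n j0 := sub_nonneg.2 (c.mn_le_Mx n j0)
  intro m
  induction m with
  | zero =>
    intro j hj
    rw [reach, Finset.mem_singleton] at hj
    subst hj
    rw [Nat.add_zero, hval, Nat.mul_zero, pow_zero, one_mul]
    linarith
  | succ m ih =>
    intro j hj
    obtain ⟨l, hl, hadj⟩ := c.mem_reach_succ.1 hj
    obtain ⟨i0, hi0j, hi0l⟩ := hadj
    -- abbreviations
    set M := c.Mx n j0 with hM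
    set g : ℝ := c.delta ^ (2 * m) * (M - c.mn n j0) with hg
    have hgnn : 0 ≤ g := by
      rw [hg]; positivity
    have hgD : g ≤ M - c.mn n j0 := by
      rw [hg]
      nlinarith [c.delta_pow_le_one (2 * m)]
    have hgM : g < M := by linarith
    -- the block of j, l, l0, j0 all coincide
    have hrel_l0_j : c.Related l0 j :=
      c.mem_Block.1 (c.reach_subset_block l0 (m+1) hj)
    have hrel_l0_l : c.Related l0 l :=
      c.mem_Block.1 (c.reach_subset_block l0 m hl)
    have hrel_j0_l0 : c.Related j0 l0 := c.mem_Block.1 hl0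
    have hjB : j ∈ c.Block j0 := c.mem_Block.2 (c.related_trans hrel_j0_l0 hrel_l0_j)
    have hlB : l ∈ c.Block j0 := c.mem_Block.2 (c.related_trans hrel_j0_l0 hrel_l0_l)
    -- values r (n+m) on the block are ≤ M
    have hub : ∀ l' ∈ c.Block j0, c.r (n + m) l' ≤ M := by
      intro l' hl'
      calc c.r (n + m) l' ≤ c.Mx (n + m) j0 := c.r_le_Mx hl'
        _ ≤ M := c.Mx_add_le n m j0
    -- Step 1: inner sum bound for row i0
    have hinner : (1 - c.delta) / M + c.delta / (M - g)
        ≤ Rrat c.a (c.X (2 * (n + m) + 2)) i0 := by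
      rw [c.Rrat_even_eq (n + m) i0]
      have hgain : (M - g)⁻¹ ≤ (c.r (n + m) l)⁻¹ := by
        apply inv_anti₀ (c.r_pos _ l)
        exact ih l hl
      have hA : ∀ l', 0 < c.t (n + m) i0 l' → M⁻¹ ≤ (c.r (n + m) l')⁻¹ := by
        intro l' hl'
        have hil' : 0 < c.X0 i0 l' := (c.t_pos_iff _ i0 l').1 hl'
        have hl'B : l' ∈ c.Block j0 := c.mem_Block.2
          (c.related_trans (c.related_trans hrel_j0_l0 hrel_l0_l)
            (c.related_of_adj ⟨i0, hi0l, hil'⟩))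
        exact inv_anti₀ (c.r_pos _ l') (hub l' hl'B)
      have hAB : M⁻¹ ≤ (M - g)⁻¹ := by
        apply inv_anti₀ (by linarith)
        linarith
      have := gain_avg_ge (c.t (n + m) i0) (fun l' => (c.r (n + m) l')⁻¹)
        M⁻¹ ((M - g)⁻¹) c.delta l
        (c.t_nonneg (n + m) i0) (c.sum_t (n + m) i0) hA hδ
        (c.t_ge_delta (n + m) hi0l) hAB hgain
      calc (1 - c.delta) / M + c.delta / (M - g)
          = (1 - c.delta) * M⁻¹ + c.delta * (M - g)⁻¹ := by
            rw [div_eq_mul_inv, div_eq_mul_inv]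
        _ ≤ _ := this
    -- Step 2: harmonic step
    have hstep2 : (Rrat c.a (c.X (2 * (n + m) + 2)) i0)⁻¹ ≤ M - c.delta * g :=
      inv_le_max_sub_gain _ M g c.delta hMx hgnn hgM hδ hδ1 hinner
    -- Step 3: outer averaging
    have houter : c.r (n + m + 1) j ≤ M - c.delta * (c.delta * g) := by
      rw [c.r_succ (n + m) j]
      refine avg_le_max_sub_gain (fun i => c.w (n + m) i j)
        (fun i => (Rrat c.a (c.X (2 * (n + m) + 2)) i)⁻¹) M (c.delta * g) c.delta i0
        (fun i => c.w_nonneg (n + m) i j) (c.sum_w (n + m) j) ?_ hδ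
        (c.w_ge_delta (n + m) hi0j) (by positivity) (by linarith)
      intro i hi
      have hij' : 0 < c.X0 i j := (c.w_pos_iff _ i j).1 hi
      have h1 := (c.Rinv_mem (n := n + m) hij').2
      calc (Rrat c.a (c.X (2 * (n + m) + 2)) i)⁻¹ ≤ c.Mx (n + m) j := h1
        _ = c.Mx (n + m) j0 := (c.Mx_eq_of_related
            (c.related_trans hrel_j0_l0 hrel_l0_j)).symm
        _ ≤ M := c.Mx_add_le n m j0
    have hfin : c.delta * (c.delta * g) = c.delta ^ (2 * (m + 1)) * (M - c.mn n j0) := by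
      rw [hg, show 2 * (m + 1) = 2 * m + 2 from by ring, pow_add]
      ring
    rw [show n + (m + 1) = n + m + 1 from rfl]
    rw [hfin] at houter
    exact houter

/-- The `q`-step contraction of the block oscillation. -/
lemma contraction (n : ℕ) (j0 : Fin q) :
    c.Mx (n + q) j0 - c.mn (n + q) j0
      ≤ (1 - c.delta ^ (2 * q)) * (c.Mx n j0 - c.mn n j0) := by
  obtain ⟨l0, hl0, hval⟩ := c.exists_mn n j0
  have hgain := c.gain_propagation n j0 l0 hl0 hval.symm q
  have hMx' : c.Mx (n + q) j0 ≤ c.Mx n j0 - c.delta ^ (2 * q) * (c.Mx n j0 - c.mn n j0) := by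
    obtain ⟨lm, hlm, hlmval⟩ := c.exists_Mx (n + q) j0
    rw [hlmval]
    refine hgain lm (c.mem_reach_q_of_related ?_)
    exact c.related_trans (c.related_symm (c.mem_Block.1 hl0)) (c.mem_Block.1 hlm)
  have hmn' : c.mn n j0 ≤ c.mn (n + q) j0 := c.mn_add_ge n q j0
  nlinarith

end Ctx
end IPFPAux

namespace IPFPAux

/-- Generic geometric decay from a `q'`-step contraction plus monotonicity. -/
lemma geom_decay_aux (u : ℕ → ℝ) (ρ : ℝ) (hρ0 : 0 ≤ ρ) (q' : ℕ) (hq' : 0 < q')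
    (hmono : ∀ n, u (n + 1) ≤ u n)
    (hcontract : ∀ n, u (n + q') ≤ ρ * u n) (n : ℕ) :
    u n ≤ ρ ^ (n / q') * u 0 := by
  have hanti : ∀ m k, u (m + k) ≤ u m := by
    intro m k
    induction k with
    | zero => exact le_refl _
    | succ k ih => exact le_trans (hmono (m + k)) ih
  have key : ∀ k n, q' * k ≤ n → u n ≤ ρ ^ k * u 0 := by
    intro k
    induction k with
    | zero => intro n _; simpa using hanti 0 n
    | succ k ih =>
      intro n hn
      have h1 : q' * k + q' ≤ n := by
        calc q' * k + q' = q' * (k + 1) := by ring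
          _ ≤ n := hn
      have h2 : u n ≤ u (q' * k + q') := by
        have := hanti (q' * k + q') (n - (q' * k + q'))
        rwa [show q' * k + q' + (n - (q' * k + q')) = n from by omega] at this
      calc u n ≤ u (q' * k + q') := h2
        _ ≤ ρ * u (q' * k) := hcontract (q' * k)
        _ ≤ ρ * (ρ ^ k * u 0) := by
            apply mul_le_mul_of_nonneg_left (ih (q' * k) (le_refl _)) hρ0
        _ = ρ ^ (k + 1) * u 0 := by ring
  exact key (n / q') n (by rw [mul_comm]; exact Nat.div_mul_le_self n q')

/-- Bound `ρ^(n/q')` by a true geometric sequence. -/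
lemma rho_pow_div_le (ρ : ℝ) (hρ : 1/2 ≤ ρ) (hρ1 : ρ < 1) (q' : ℕ) (hq' : 0 < q') (n : ℕ) :
    ρ ^ (n / q') ≤ 2 * (ρ ^ ((q' : ℝ)⁻¹)) ^ n := by
  have hρ0 : (0:ℝ) < ρ := by linarith
  have hq'' : (0:ℝ) < (q' : ℝ) := by exact_mod_cast hq'
  have hfloor : (n : ℝ) / (q' : ℝ) - 1 ≤ ((n / q' : ℕ) : ℝ) := by
    have h1 : n < q' * (n / q' + 1) := Nat.lt_mul_div_succ n hq'
    have h2 : (n : ℝ) < (q' : ℝ) * (((n / q' : ℕ) : ℝ) + 1) := by exact_mod_cast h1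
    rw [sub_le_iff_le_add, div_le_iff₀ hq'']
    nlinarith
  have step1 : ρ ^ (n / q') = ρ ^ (((n / q' : ℕ) : ℝ)) := (Real.rpow_natCast ρ _).symm
  have step2 : ρ ^ (((n / q' : ℕ) : ℝ)) ≤ ρ ^ ((n : ℝ) / (q' : ℝ) - 1) :=
    Real.rpow_le_rpow_of_exponent_ge hρ0 hρ1.le hfloor
  have step3 : ρ ^ ((n : ℝ) / (q' : ℝ) - 1) = ρ ^ ((n : ℝ) / (q' : ℝ)) / ρ := by
    rw [Real.rpow_sub hρ0, Real.rpow_one]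
  have step4 : ρ ^ ((n : ℝ) / (q' : ℝ)) = (ρ ^ ((q' : ℝ)⁻¹)) ^ n := by
    rw [div_eq_mul_inv, mul_comm, Real.rpow_mul hρ0.le, Real.rpow_natCast]
  have hpow : 0 ≤ (ρ ^ ((q' : ℝ)⁻¹)) ^ n := by positivity
  rw [step1]
  refine le_trans step2 ?_
  rw [step3, step4]
  rw [div_le_iff₀ hρ0]
  nlinarith

namespace Ctx
open Finset
variable {p q : ℕ} (c : Ctx p q)

open Classical in
/-- Rows meeting the block of `j`. -/
noncomputable def Rows (j : Fin q) : Finset (Fin p) :=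
  Finset.univ.filter (fun i => ∃ l ∈ c.Block j, 0 < c.X0 i l)

lemma block_colsum_generic (Y : Matrix (Fin p) (Fin q) ℝ)
    (hiff : ∀ i l, 0 < Y i l ↔ 0 < c.X0 i l) (hnn : ∀ i l, 0 ≤ Y i l)
    (hrow : ∀ i, rowSum Y i = c.a i) (j : Fin q) :
    ∑ l ∈ c.Block j, colSum Y l = ∑ i ∈ c.Rows j, c.a i := by
  classical
  unfold colSum
  rw [Finset.sum_comm]
  have key : ∀ i, (∑ l ∈ c.Block j, Y i l) = if i ∈ c.Rows j then c.a i else 0 := by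
    intro i
    by_cases hi : i ∈ c.Rows j
    · rw [if_pos hi, ← hrow i]
      unfold rowSum
      symm
      apply (Finset.sum_subset (Finset.subset_univ _) _).symm
      intro l _ hl
      by_contra hne
      have hpos : 0 < Y i l := lt_of_le_of_ne (hnn i l) (Ne.symm hne)
      have hX0 : 0 < c.X0 i l := (hiff i l).1 hpos
      obtain ⟨l', hl', hil'⟩ := (Finset.mem_filter.1 hi).2
      have : l ∈ c.Block j := c.mem_Block.2
        (c.related_trans (c.mem_Block.1 hl') (c.related_of_adj ⟨i, hil', hX0⟩))
      exact hl this
    · rw [if_neg hi]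
      apply Finset.sum_eq_zero
      intro l hl
      by_contra hne
      have hpos : 0 < Y i l := lt_of_le_of_ne (hnn i l) (Ne.symm hne)
      exact hi (Finset.mem_filter.2 ⟨mem_univ _, ⟨l, hl, (hiff i l).1 hpos⟩⟩)
  rw [Finset.sum_congr rfl (fun i _ => key i), Finset.sum_ite_mem, Finset.univ_inter]

lemma sum_b_block (j : Fin q) : ∑ l ∈ c.Block j, c.b l = ∑ i ∈ c.Rows j, c.a i := by
  have h := c.block_colsum_generic c.S (fun i l => (c.hSsupp i l))
    c.S_nonneg c.hS.2.1 j
  rw [← h]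
  exact Finset.sum_congr rfl fun l _ => (c.hS.2.2 l).symm

lemma sum_rb_block (n : ℕ) (j : Fin q) :
    ∑ l ∈ c.Block j, c.r n l * c.b l = ∑ l ∈ c.Block j, c.b l := by
  have h := c.block_colsum_generic (c.X (2 * n + 1))
    (fun i l => (c.good_X (2 * n + 1)).2.1 i l)
    (fun i l => (c.good_X (2 * n + 1)).1 i l)
    (c.rowSum_odd n) j
  calc ∑ l ∈ c.Block j, c.r n l * c.b l
      = ∑ l ∈ c.Block j, colSum (c.X (2 * n + 1)) l :=
        Finset.sum_congr rfl fun l _ => (c.colSum_odd_eq n l).symm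
    _ = ∑ i ∈ c.Rows j, c.a i := h
    _ = ∑ l ∈ c.Block j, c.b l := (c.sum_b_block j).symm

lemma mn_le_one (n : ℕ) (j : Fin q) : c.mn n j ≤ 1 := by
  by_contra hcon
  push_neg at hcon
  have : ∑ l ∈ c.Block j, c.b l < ∑ l ∈ c.Block j, c.r n l * c.b l := by
    refine Finset.sum_lt_sum_of_nonempty (c.Block_nonempty j) fun l hl => ?_
    have h1 : 1 < c.r n l := lt_of_lt_of_le hcon (c.mn_le_r hl)
    nlinarith [c.hb l]
  rw [c.sum_rb_block n j] at this
  exact lt_irrefl _ this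

lemma one_le_Mx (n : ℕ) (j : Fin q) : 1 ≤ c.Mx n j := by
  by_contra hcon
  push_neg at hcon
  have : ∑ l ∈ c.Block j, c.r n l * c.b l < ∑ l ∈ c.Block j, c.b l := by
    refine Finset.sum_lt_sum_of_nonempty (c.Block_nonempty j) fun l hl => ?_
    have h1 : c.r n l < 1 := lt_of_le_of_lt (c.r_le_Mx hl) hcon
    nlinarith [c.hb l, c.r_pos n l]
  rw [c.sum_rb_block n j] at this
  exact lt_irrefl _ this

/-- The oscillation over blocks. -/
noncomputable def Dg (n : ℕ) (j : Fin q) : ℝ := c.Mx n j - c.mn n j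

lemma Dg_nonneg (n : ℕ) (j : Fin q) : 0 ≤ c.Dg n j := sub_nonneg.2 (c.mn_le_Mx n j)

lemma Dg_succ_le (n : ℕ) (j : Fin q) : c.Dg (n + 1) j ≤ c.Dg n j := by
  have h1 := c.Mx_succ_le n j
  have h2 := c.mn_succ_ge n j
  unfold Dg; linarith

noncomputable def kappa : ℝ := c.delta ^ (2 * q)
noncomputable def rho : ℝ := 1 - c.kappa / 2
noncomputable def theta : ℝ := c.rho ^ ((q : ℝ)⁻¹)

lemma kappa_pos : 0 < c.kappa := pow_pos c.delta_pos _
lemma kappa_le_one : c.kappa ≤ 1 := c.delta_pow_le_one _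
lemma rho_lt_one : c.rho < 1 := by unfold rho; have := c.kappa_pos; linarith
lemma half_le_rho : 1/2 ≤ c.rho := by unfold rho; have := c.kappa_le_one; linarith
lemma rho_pos : 0 < c.rho := lt_of_lt_of_le (by norm_num) c.half_le_rho
lemma theta_pos : 0 < c.theta := Real.rpow_pos_of_pos c.rho_pos _
lemma theta_lt_one : c.theta < 1 := by
  apply Real.rpow_lt_one c.rho_pos.le c.rho_lt_one
  have : (0:ℝ) < (q : ℝ) := by exact_mod_cast c.hq
  positivity

lemma Dg_contract (n : ℕ) (j : Fin q) : c.Dg (n + q) j ≤ c.rho * c.Dg n j := by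
  have h1 := c.contraction n j
  have h2 := c.Dg_nonneg n j
  have h3 := c.kappa_pos
  unfold Dg at h2 ⊢
  unfold rho kappa
  nlinarith [mul_nonneg (pow_pos c.delta_pos (2*q)).le h2]

lemma Dg_decay (n : ℕ) (j : Fin q) : c.Dg n j ≤ c.rho ^ (n / q) * c.Dg 0 j :=
  geom_decay_aux (fun n => c.Dg n j) c.rho c.rho_pos.le q c.hq
    (fun n => c.Dg_succ_le n j) (fun n => c.Dg_contract n j) n

/-- Global constant. -/
noncomputable def CC : ℝ := 2 * ∑ j, c.Dg 0 j

lemma CC_nonneg : 0 ≤ c.CC := by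
  unfold CC
  have : 0 ≤ ∑ j, c.Dg 0 j := Finset.sum_nonneg fun j _ => c.Dg_nonneg 0 j
  linarith

lemma Dg_geom (n : ℕ) (j : Fin q) : c.Dg n j ≤ c.CC * c.theta ^ n := by
  have h1 := c.Dg_decay n j
  have h2 := rho_pow_div_le c.rho c.half_le_rho c.rho_lt_one q c.hq n
  have h3 : c.Dg 0 j ≤ ∑ j', c.Dg 0 j' :=
    Finset.single_le_sum (fun j' _ => c.Dg_nonneg 0 j') (mem_univ j)
  have h4 : (0:ℝ) ≤ c.rho ^ (n / q) := pow_nonneg c.rho_pos.le _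
  have h5 : (0:ℝ) ≤ c.theta ^ n := pow_nonneg c.theta_pos.le _
  have h6 := c.Dg_nonneg 0 j
  calc c.Dg n j ≤ c.rho ^ (n / q) * c.Dg 0 j := h1
    _ ≤ (2 * c.theta ^ n) * c.Dg 0 j := by
        refine mul_le_mul_of_nonneg_right ?_ h6
        unfold theta
        exact h2
    _ ≤ (2 * c.theta ^ n) * ∑ j', c.Dg 0 j' := by
        apply mul_le_mul_of_nonneg_left h3
        positivity
    _ = c.theta ^ n * c.CC := by unfold CC; ring
    _ = c.CC * c.theta ^ n := by ring

lemma abs_r_sub_one_le (n : ℕ) (j : Fin q) : |c.r n j - 1| ≤ c.Dg n j := by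
  have h1 : c.r n j ≤ c.Mx n j := c.r_le_Mx (c.self_mem_Block j)
  have h2 : c.mn n j ≤ c.r n j := c.mn_le_r (c.self_mem_Block j)
  have h3 := c.mn_le_one n j
  have h4 := c.one_le_Mx n j
  rw [abs_le]
  unfold Dg
  constructor <;> linarith

lemma abs_R_sub_one_le (n : ℕ) (i : Fin p) :
    |Rrat c.a (c.X (2 * n + 2)) i - 1| ≤ c.Dg n (Classical.choose (c.exists_pos_in_row i)) / c.delta := by
  set j := Classical.choose (c.exists_pos_in_row i) with hj
  have hij : 0 < c.X0 i j := Classical.choose_spec (c.exists_pos_in_row i)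
  have hmem := c.Rinv_mem (n := n) hij
  have hmn := c.mn_pos n j
  have hMx : (0:ℝ) < c.Mx n j := lt_of_lt_of_le hmn (c.mn_le_Mx n j)
  have hδ := c.delta_pos
  have hδ1 := c.delta_le_one
  have hδmn := c.delta_le_mn n j
  have h3 := c.mn_le_one n j
  have h4 := c.one_le_Mx n j
  have hRpos := c.Rrat_even_pos n i
  have hub : Rrat c.a (c.X (2 * n + 2)) i ≤ (c.mn n j)⁻¹ := by
    have := inv_anti₀ hmn hmem.1
    rwa [inv_inv] at this
  have hlb : (c.Mx n j)⁻¹ ≤ Rrat c.a (c.X (2 * n + 2)) i := by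
    have := inv_anti₀ (inv_pos.2 hRpos) hmem.2
    rwa [inv_inv] at this
  have hDg := c.Dg_nonneg n j
  have e1 : (c.mn n j)⁻¹ - 1 = (1 - c.mn n j) / c.mn n j := by field_simp
  have e2 : 1 - (c.Mx n j)⁻¹ = (c.Mx n j - 1) / c.Mx n j := by field_simp
  have b1 : (1 - c.mn n j) / c.mn n j ≤ c.Dg n j / c.delta :=
    div_le_div₀ hDg (by unfold Dg; linarith) hδ hδmn
  have b2 : (c.Mx n j - 1) / c.Mx n j ≤ c.Dg n j / c.delta :=
    div_le_div₀ hDg (by unfold Dg; linarith) hδ (by linarith)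
  have u1 : (c.mn n j)⁻¹ - 1 ≤ c.Dg n j / c.delta := by rw [e1]; exact b1
  have u2 : 1 - (c.Mx n j)⁻¹ ≤ c.Dg n j / c.delta := by rw [e2]; exact b2
  rw [abs_le]
  constructor
  · linarith
  · linarith

end Ctx
end IPFPAux

namespace IPFPAux
open Filter Topology

lemma tendsto_rpow_inv_nat (C : ℝ) (hC : 1 ≤ C) :
    Tendsto (fun n : ℕ => C ^ ((n : ℝ)⁻¹)) atTop (𝓝 1) := by
  have hC0 : (0:ℝ) < C := by linarith
  have h1 : ∀ n : ℕ, C ^ ((n:ℝ)⁻¹) = Real.exp (Real.log C * (n:ℝ)⁻¹) := by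
    intro n
    rw [← Real.exp_log hC0, ← Real.exp_mul, Real.log_exp]
  simp only [h1]
  have h2 : Tendsto (fun n : ℕ => Real.log C * (n:ℝ)⁻¹) atTop (𝓝 0) := by
    have h3 : Tendsto (fun n : ℕ => ((n : ℝ))⁻¹) atTop (𝓝 0) :=
      tendsto_inv_atTop_zero.comp tendsto_natCast_atTop_atTop
    have := h3.const_mul (Real.log C)
    simpa using this
  have := (Real.continuous_exp.tendsto 0).comp h2
  simpa [Function.comp_def] using this

lemma limsup_rpow_lt_one (x : ℕ → ℝ) (C θ : ℝ) (hx : ∀ n, 0 ≤ x n)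
    (hθ0 : 0 < θ) (hθ1 : θ < 1) (hb : ∀ n, x n ≤ C * θ ^ n) :
    Filter.limsup (fun n : ℕ => (x n) ^ ((n : ℝ)⁻¹)) atTop < 1 := by
  set Cm := max C 1 with hCmdef
  have hCm : (1:ℝ) ≤ Cm := le_max_right _ _
  have hCm0 : (0:ℝ) < Cm := by linarith
  have hb' : ∀ n, x n ≤ Cm * θ ^ n := fun n =>
    le_trans (hb n) (mul_le_mul_of_nonneg_right (le_max_left _ _) (pow_nonneg hθ0.le n))
  have htgt1 : (1 + θ)/2 < 1 := by linarith
  have hev : ∀ᶠ n : ℕ in atTop, (x n) ^ ((n:ℝ)⁻¹) ≤ (1 + θ)/2 := by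
    have hgt : (1:ℝ) < ((1 + θ)/2) / θ := by
      rw [lt_div_iff₀ hθ0]; linarith
    have h1 : ∀ᶠ n : ℕ in atTop, Cm ^ ((n:ℝ)⁻¹) ≤ ((1 + θ)/2) / θ :=
      (tendsto_rpow_inv_nat Cm hCm).eventually_le_const hgt
    filter_upwards [h1, Filter.eventually_ge_atTop 1] with n hn hn1
    have hninv : (0:ℝ) ≤ (n:ℝ)⁻¹ := by positivity
    have step1 : (x n) ^ ((n:ℝ)⁻¹) ≤ (Cm * θ ^ n) ^ ((n:ℝ)⁻¹) :=
      Real.rpow_le_rpow (hx n) (hb' n) hninv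
    have step2 : (Cm * θ ^ n) ^ ((n:ℝ)⁻¹) = Cm ^ ((n:ℝ)⁻¹) * θ := by
      rw [Real.mul_rpow hCm0.le (pow_nonneg hθ0.le n),
        Real.pow_rpow_inv_natCast hθ0.le (by omega : n ≠ 0)]
    calc (x n) ^ ((n:ℝ)⁻¹) ≤ Cm ^ ((n:ℝ)⁻¹) * θ := by rw [← step2]; exact step1
      _ ≤ (((1 + θ)/2) / θ) * θ := mul_le_mul_of_nonneg_right hn hθ0.le
      _ = (1 + θ)/2 := by field_simp
  have hco : Filter.IsCoboundedUnder (· ≤ ·) Filter.atTop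
      (fun n : ℕ => (x n) ^ ((n:ℝ)⁻¹)) :=
    Filter.isCoboundedUnder_le_of_le Filter.atTop
      (fun n => Real.rpow_nonneg (hx n) _)
  exact lt_of_le_of_lt (Filter.limsup_le_of_le hco hev) htgt1

lemma geomSeq_of_bound (x : ℕ → ℝ) (l C θ : ℝ) (hθ0 : 0 < θ) (hθ1 : θ < 1)
    (hb : ∀ n, |x n - l| ≤ C * θ ^ n) : geomSeq x l := by
  constructor
  · rw [tendsto_iff_dist_tendsto_zero]
    refine squeeze_zero (g := fun n => C * θ ^ n) (fun n => dist_nonneg) (fun n => ?_) ?_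
    · rw [Real.dist_eq]; exact hb n
    · have := (tendsto_pow_atTop_nhds_zero_of_lt_one hθ0.le hθ1).const_mul C
      simpa using this
  · exact limsup_rpow_lt_one _ C θ (fun n => abs_nonneg _) hθ0 hθ1 hb

namespace Ctx
open Finset
variable {p q : ℕ} (c : Ctx p q)

lemma abs_r_geom (n : ℕ) (j : Fin q) : |c.r n j - 1| ≤ c.CC * c.theta ^ n :=
  le_trans (c.abs_r_sub_one_le n j) (c.Dg_geom n j)

lemma abs_R_geom (n : ℕ) (i : Fin p) :
    |Rrat c.a (c.X (2 * n + 2)) i - 1| ≤ (c.CC / c.delta) * c.theta ^ n := by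
  refine le_trans (c.abs_R_sub_one_le n i) ?_
  rw [div_mul_eq_mul_div, div_le_div_iff₀ c.delta_pos c.delta_pos]
  have h := c.Dg_geom n (Classical.choose (c.exists_pos_in_row i))
  nlinarith [c.delta_pos, pow_nonneg c.theta_pos.le n, c.CC_nonneg,
    c.Dg_nonneg n (Classical.choose (c.exists_pos_in_row i))]

/-- Uniform bound for the even-index row ratios, all `n`. -/
lemma abs_R_even_geom (i : Fin p) (n : ℕ) :
    |Rrat c.a (c.X (2 * n)) i - 1|
      ≤ (c.CC / (c.delta * c.theta) + |Rrat c.a c.X0 i - 1|) * c.theta ^ n := by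
  have hθ := c.theta_pos
  have hδ := c.delta_pos
  have hCC := c.CC_nonneg
  cases n with
  | zero =>
    simp only [Nat.mul_zero, pow_zero, mul_one]
    have : c.X 0 = c.X0 := rfl
    rw [this]
    have : 0 ≤ c.CC / (c.delta * c.theta) := by positivity
    linarith
  | succ m =>
    have h1 : 2 * (m + 1) = 2 * m + 2 := by ring
    rw [h1]
    refine le_trans (c.abs_R_geom m i) ?_
    have he : c.CC / (c.delta * c.theta) * c.theta ^ (m + 1) = (c.CC / c.delta) * c.theta ^ m := by
      rw [pow_succ]
      field_simp
    have hnn : 0 ≤ |Rrat c.a c.X0 i - 1| * c.theta ^ (m+1) := by positivity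
    calc (c.CC / c.delta) * c.theta ^ m
        = c.CC / (c.delta * c.theta) * c.theta ^ (m + 1) := he.symm
      _ ≤ _ := by rw [add_mul]; linarith

/-- Consecutive entry differences. -/
lemma diff_even_odd (n : ℕ) (i : Fin p) (j : Fin q) :
    |c.X (2 * n + 1) i j - c.X (2 * n) i j| ≤ |Rrat c.a (c.X (2 * n)) i - 1| := by
  have hR := c.good_Rrat_pos (c.good_X (2 * n)) i
  have he : c.X (2 * n + 1) i j * (1 - Rrat c.a (c.X (2 * n)) i)
      = c.X (2 * n + 1) i j - c.X (2 * n) i j := by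
    rw [X_odd]
    show (c.X (2*n) i j / Rrat c.a (c.X (2*n)) i) * _
      = c.X (2*n) i j / Rrat c.a (c.X (2*n)) i - c.X (2*n) i j
    field_simp
  rw [← he, abs_mul]
  have h1 : |c.X (2 * n + 1) i j| ≤ 1 := by
    rw [abs_of_nonneg ((c.good_X _).1 i j)]
    exact c.entry_le_one (c.good_X _) i j
  have h2 : |1 - Rrat c.a (c.X (2 * n)) i| = |Rrat c.a (c.X (2 * n)) i - 1| := abs_sub_comm _ _
  rw [h2]
  nlinarith [abs_nonneg (Rrat c.a (c.X (2 * n)) i - 1), abs_nonneg (c.X (2 * n + 1) i j)]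

lemma diff_odd_even (n : ℕ) (i : Fin p) (j : Fin q) :
    |c.X (2 * n + 2) i j - c.X (2 * n + 1) i j| ≤ |c.r n j - 1| := by
  have hC := c.r_pos n j
  have he : c.X (2 * n + 2) i j * (1 - c.r n j)
      = c.X (2 * n + 2) i j - c.X (2 * n + 1) i j := by
    rw [X_even]
    show (c.X (2*n+1) i j / Crat c.b (c.X (2*n+1)) j) * _
      = c.X (2*n+1) i j / Crat c.b (c.X (2*n+1)) j - c.X (2*n+1) i j
    rw [show Crat c.b (c.X (2*n+1)) j = c.r n j from rfl]
    field_simp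
  rw [← he, abs_mul]
  have h1 : |c.X (2 * n + 2) i j| ≤ 1 := by
    rw [abs_of_nonneg ((c.good_X _).1 i j)]
    exact c.entry_le_one (c.good_X _) i j
  have h2 : |1 - c.r n j| = |c.r n j - 1| := abs_sub_comm _ _
  rw [h2]
  nlinarith [abs_nonneg (c.r n j - 1), abs_nonneg (c.X (2 * n + 2) i j)]

noncomputable def sigma : ℝ := Real.sqrt c.theta

lemma sigma_pos : 0 < c.sigma := Real.sqrt_pos.2 c.theta_pos
lemma sigma_lt_one : c.sigma < 1 := by
  have := Real.sqrt_lt_sqrt c.theta_pos.le c.theta_lt_one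
  rwa [Real.sqrt_one] at this
lemma sigma_sq (n : ℕ) : c.sigma ^ (2 * n) = c.theta ^ n := by
  rw [pow_mul]
  congr 1
  rw [sigma, Real.sq_sqrt c.theta_pos.le]

noncomputable def R0const : ℝ :=
  Finset.univ.sup' (Finset.univ_nonempty_iff.2 ⟨⟨0, c.hp⟩⟩) (fun i => |Rrat c.a c.X0 i - 1|)

lemma abs_R0_le (i : Fin p) : |Rrat c.a c.X0 i - 1| ≤ c.R0const := by
  unfold R0const
  exact Finset.le_sup' (fun i => |Rrat c.a c.X0 i - 1|) (mem_univ i)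

lemma R0const_nonneg : 0 ≤ c.R0const :=
  le_trans (abs_nonneg (Rrat c.a c.X0 ⟨0, c.hp⟩ - 1)) (c.abs_R0_le ⟨0, c.hp⟩)

noncomputable def KK : ℝ := c.R0const + c.CC / (c.delta * c.theta) + c.CC / c.sigma

lemma KK_nonneg : 0 ≤ c.KK := by
  have h1 := c.R0const_nonneg
  have h2 := c.CC_nonneg
  have h3 := c.delta_pos
  have h4 := c.theta_pos
  have h5 := c.sigma_pos
  unfold KK
  positivity

lemma diff_all (k : ℕ) (i : Fin p) (j : Fin q) :
    |c.X (k + 1) i j - c.X k i j| ≤ c.KK * c.sigma ^ k := by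
  have hσ := c.sigma_pos
  have hθ := c.theta_pos
  have hδ := c.delta_pos
  have hCC := c.CC_nonneg
  have hR0 := c.R0const_nonneg
  rcases Nat.even_or_odd k with ⟨n, hn⟩ | ⟨n, hn⟩
  · -- k = 2n
    have hk : k = 2 * n := by omega
    subst hk
    refine le_trans (c.diff_even_odd n i j) ?_
    refine le_trans (c.abs_R_even_geom i n) ?_
    rw [c.sigma_sq n]
    have hpow : (0:ℝ) ≤ c.theta ^ n := by positivity
    have : c.CC / (c.delta * c.theta) + |Rrat c.a c.X0 i - 1| ≤ c.KK := by
      have := c.abs_R0_le i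
      have h6 : 0 ≤ c.CC / c.sigma := by positivity
      unfold KK; linarith
    nlinarith
  · -- k = 2n + 1
    have hk : k = 2 * n + 1 := by omega
    subst hk
    have h1 : 2 * n + 1 + 1 = 2 * n + 2 := rfl
    rw [h1]
    refine le_trans (c.diff_odd_even n i j) ?_
    refine le_trans (c.abs_r_geom n j) ?_
    have he : c.CC * c.theta ^ n = (c.CC / c.sigma) * c.sigma ^ (2 * n + 1) := by
      rw [pow_succ, c.sigma_sq n]
      field_simp
    rw [he]
    have hpow : (0:ℝ) ≤ c.sigma ^ (2*n+1) := by positivity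
    have : c.CC / c.sigma ≤ c.KK := by
      have h6 : 0 ≤ c.CC / (c.delta * c.theta) := by positivity
      unfold KK; linarith
    nlinarith

end Ctx
end IPFPAux

namespace IPFPAux
namespace Ctx
open Filter Topology Finset
variable {p q : ℕ} (c : Ctx p q)

lemma X_exists_lim (i : Fin p) (j : Fin q) :
    ∃ L, Tendsto (fun k => c.X k i j) atTop (𝓝 L) := by
  have hcs : CauchySeq (fun k => c.X k i j) :=
    cauchySeq_of_le_geometric c.sigma c.KK c.sigma_lt_one
      (fun n => by rw [Real.dist_eq, abs_sub_comm]; exact c.diff_all n i j)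
  exact cauchySeq_tendsto_of_complete hcs

noncomputable def Xinf : Matrix (Fin p) (Fin q) ℝ :=
  fun i j => Classical.choose (c.X_exists_lim i j)

lemma Xinf_tendsto (i : Fin p) (j : Fin q) :
    Tendsto (fun k => c.X k i j) atTop (𝓝 (c.Xinf i j)) :=
  Classical.choose_spec (c.X_exists_lim i j)

lemma Xinf_dist (n : ℕ) (i : Fin p) (j : Fin q) :
    |c.X n i j - c.Xinf i j| ≤ c.KK * c.sigma ^ n / (1 - c.sigma) := by
  have := dist_le_of_le_geometric_of_tendsto c.sigma c.KK c.sigma_lt_one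
    (f := fun k => c.X k i j)
    (fun k => by rw [Real.dist_eq, abs_sub_comm]; exact c.diff_all k i j)
    (c.Xinf_tendsto i j) n
  rwa [Real.dist_eq] at this

lemma Xinf_pos {i : Fin p} {j : Fin q} (hij : 0 < c.X0 i j) : c.delta ≤ c.Xinf i j :=
  ge_of_tendsto (c.Xinf_tendsto i j)
    (Filter.Eventually.of_forall fun n => c.delta_le_X n hij)

lemma Xinf_zero {i : Fin p} {j : Fin q} (hij : ¬ 0 < c.X0 i j) : c.Xinf i j = 0 := by
  have hz : ∀ n, c.X n i j = 0 := fun n =>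
    le_antisymm (not_lt.1 fun hpos => hij (((c.good_X n).2.1 i j).1 hpos)) ((c.good_X n).1 i j)
  have h1 : Tendsto (fun k => c.X k i j) atTop (𝓝 0) := by
    simp only [hz]
    exact tendsto_const_nhds
  exact tendsto_nhds_unique (c.Xinf_tendsto i j) h1

end Ctx
end IPFPAux

open IPFPAux Filter Topology


/-- If `Γ(a,b)` contains a matrix with the same support as `X_0`, then:
(i) each `(R_i(X_{2n}))_n` and each `(C_j(X_{2n+1}))_n` converges to `1` at an at least
geometric rate;
(ii) the IPFP sequence converges at an at least geometric rate to a matrix `X_∞` with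
`Supp(X_∞) = Supp(X_0)`. -/
theorem ipfp_fast_convergence
    (p q : ℕ) (hp : 2 ≤ p) (hq : 2 ≤ q)
    (a : Fin p → ℝ) (b : Fin q → ℝ)
    (ha : ∀ i, 0 < a i) (hb : ∀ j, 0 < b j)
    (hsa : ∑ i, a i = 1) (hsb : ∑ j, b j = 1)
    (X0 : Matrix (Fin p) (Fin q) ℝ) (hX0 : memGamma1 X0)
    (h : ∃ S, memGamma a b S ∧ ∀ i j, 0 < S i j ↔ 0 < X0 i j) :
    (∀ i, geomSeq (fun n => Rrat a (ipfp a b X0 (2 * n)) i) 1) ∧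
    (∀ j, geomSeq (fun n => Crat b (ipfp a b X0 (2 * n + 1)) j) 1) ∧
    ∃ Xinf : Matrix (Fin p) (Fin q) ℝ,
      (∀ i j, 0 < Xinf i j ↔ 0 < X0 i j) ∧ geomMat (ipfp a b X0) Xinf := by
  obtain ⟨S, hS, hSsupp⟩ := h
  let c : Ctx p q := ⟨by omega, by omega, a, b, ha, hb, hsa, hsb, X0, hX0, S, hS, hSsupp⟩
  have hθ0 := c.theta_pos
  have hθ1 := c.theta_lt_one
  have hσ0 := c.sigma_pos
  have hσ1 := c.sigma_lt_one
  refine ⟨?_, ?_, ?_⟩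
  · intro i
    exact geomSeq_of_bound _ 1 (c.CC / (c.delta * c.theta) + |Rrat c.a c.X0 i - 1|)
      c.theta hθ0 hθ1 (fun n => c.abs_R_even_geom i n)
  · intro j
    exact geomSeq_of_bound _ 1 c.CC c.theta hθ0 hθ1 (fun n => c.abs_r_geom n j)
  · refine ⟨c.Xinf, fun i j => ?_, ?_, ?_⟩
    · by_cases hij : 0 < X0 i j
      · exact ⟨fun _ => hij, fun _ => lt_of_lt_of_le c.delta_pos (c.Xinf_pos hij)⟩
      · rw [c.Xinf_zero hij]
        simp [hij]
    · refine tendsto_pi_nhds.2 fun i => ?_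
      rw [tendsto_pi_nhds]
      intro j
      exact c.Xinf_tendsto i j
    · refine limsup_rpow_lt_one (fun n => ∑ i, ∑ j, |ipfp a b X0 n i j - c.Xinf i j|)
        ((p : ℝ) * q * (c.KK / (1 - c.sigma))) c.sigma
        (fun n => Finset.sum_nonneg fun i _ => Finset.sum_nonneg fun j _ => abs_nonneg _)
        hσ0 hσ1 ?_
      intro n
      calc ∑ i, ∑ j, |ipfp a b X0 n i j - c.Xinf i j|
          ≤ ∑ (_i : Fin p), ∑ (_j : Fin q), c.KK * c.sigma ^ n / (1 - c.sigma) :=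
            Finset.sum_le_sum fun i _ => Finset.sum_le_sum fun j _ => c.Xinf_dist n i j
        _ = (p : ℝ) * q * (c.KK / (1 - c.sigma)) * c.sigma ^ n := by
            simp only [Finset.sum_const, Finset.card_univ, Fintype.card_fin, smul_eq_mul]
            ring
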